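/- arXiv:1807.11183 — 2 statements merged into one kernel-verified Lean document; each statement's English description precedes it below -/
import Mathlib

section
/- Let R be a proper nonempty subset of [n] and let T be a spanning tree of Q_n that reduces over R. If T' is a spanning tree of Q_n obtained from T by a finite sequence of edge slides, then for every X ⊆ R the signature of T'(R,X) equals the signature of T(R,X); that is, for every direction i ∈ [n] − R, the number of edges of T'(R,X) in direction i equals the number of edges of T(R,X) in direction i. -/
open SimpleGraph

/-- The `n`-cube: vertices are the subsets of `[n]` (modelled as `Finset (Fin n)`),
with an edge between `X` and `Y` iff their symmetric difference is a singleton. -/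
def cube (n : ℕ) : SimpleGraph (Finset (Fin n)) where
  Adj X Y := (symmDiff X Y).card = 1
  symm := by
    constructor
    intro X Y h
    rwa [symmDiff_comm]
  loopless := by
    constructor
    intro X h
    simp [symmDiff_self, Finset.bot_eq_empty] at h

/-- `T` is a spanning tree of `G` (both graphs on the same vertex set). -/
def IsSpanningTreeOf {V : Type*} (T G : SimpleGraph V) : Prop :=
  T ≤ G ∧ T.IsTree

/-- The edge `e` of the `n`-cube is in direction `i`. -/
def edgeInDir {n : ℕ} (i : Fin n) (e : Sym2 (Finset (Fin n))) : Prop :=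
  ∃ X : Finset (Fin n), e = s(X, symmDiff X {i})

/-- The number of edges of `T` in direction `i`. -/
noncomputable def dirCount {n : ℕ} (T : SimpleGraph (Finset (Fin n))) (i : Fin n) : ℕ :=
  {e | e ∈ T.edgeSet ∧ edgeInDir i e}.ncard

/-- `a` is the signature of the tree `T`. -/
def HasSig {n : ℕ} (T : SimpleGraph (Finset (Fin n))) (a : Fin n → ℕ) : Prop :=
  ∀ i, dirCount T i = a i

/-- `a` is a signature of `Q_n`, i.e. the signature of some spanning tree of the `n`-cube. -/
def IsSignature (n : ℕ) (a : Fin n → ℕ) : Prop :=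
  ∃ T, IsSpanningTreeOf T (cube n) ∧ HasSig T a

/-- A section of the set of nonempty subsets of `[n]`. -/
def IsSection {n : ℕ} (ψ : Finset (Fin n) → Fin n) : Prop :=
  ∀ X : Finset (Fin n), X.Nonempty → ψ X ∈ X

/-- The number of nonempty subsets on which the section `ψ` takes the value `i`. -/
noncomputable def secCount {n : ℕ} (ψ : Finset (Fin n) → Fin n) (i : Fin n) : ℕ :=
  {X : Finset (Fin n) | X.Nonempty ∧ ψ X = i}.ncard

/-- The tuple `a` reduces over `R` : `Σ_{i ∈ R} a i = 2^|R| - 1`. -/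
def ReducesOver {n : ℕ} (a : Fin n → ℕ) (R : Finset (Fin n)) : Prop :=
  ∑ i ∈ R, a i = 2 ^ R.card - 1

/-- `a` is reducible: it reduces over some proper nonempty subset of `[n]`. -/
def IsReducibleSig {n : ℕ} (a : Fin n → ℕ) : Prop :=
  ∃ R : Finset (Fin n), R.Nonempty ∧ R ≠ Finset.univ ∧ ReducesOver a R

/-- `a` is irreducible. -/
def IsIrreducibleSig {n : ℕ} (a : Fin n → ℕ) : Prop := ¬ IsReducibleSig a

/-- `T` is upright: every vertex `X` is at distance `|X|` in `T` from the root `∅`. -/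
def IsUpright {n : ℕ} (T : SimpleGraph (Finset (Fin n))) : Prop :=
  ∀ X : Finset (Fin n), T.dist X ∅ = X.card

/-- `ψ` is the section associated to the upright tree `T`: for each nonempty `X`,
`ψ X ∈ X` and `X - {ψ X}` is the next vertex after `X` on the path in `T` from `X` to `∅`. -/
def IsTreeSection {n : ℕ} (T : SimpleGraph (Finset (Fin n))) (ψ : Finset (Fin n) → Fin n) : Prop :=
  ∀ X : Finset (Fin n), X.Nonempty → ψ X ∈ X ∧ T.Adj X (X.erase (ψ X))

/-- The minimum of `Σ_{i ∈ K} a i` over the sets `K` of `k` directions. -/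
noncomputable def minSum {n : ℕ} (a : Fin n → ℕ) (k : ℕ) : ℕ :=
  sInf {m : ℕ | ∃ K : Finset (Fin n), K.card = k ∧ ∑ i ∈ K, a i = m}

/-- The excess of `a` at `k`. -/
noncomputable def excess {n : ℕ} (a : Fin n → ℕ) (k : ℕ) : ℤ :=
  (minSum a k : ℤ) - (2 ^ k - 1)

/-- The result of sliding the edge `e` in direction `i`. -/
def slideEdge {n : ℕ} (i : Fin n) (e : Sym2 (Finset (Fin n))) : Sym2 (Finset (Fin n)) :=
  Sym2.map (fun X => symmDiff X {i}) e

/-- The edge `e` of the spanning tree `T` of `Q_n` is `i`-slidable. -/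
def Slidable (n : ℕ) (T : SimpleGraph (Finset (Fin n))) (i : Fin n)
    (e : Sym2 (Finset (Fin n))) : Prop :=
  e ∈ T.edgeSet ∧
    IsSpanningTreeOf (SimpleGraph.fromEdgeSet ((T.edgeSet \ {e}) ∪ {slideEdge i e})) (cube n)

/-- The edge set `E` is (the edge set of) a spanning tree of the subgraph of the
`n`-cube induced on the vertex set `s`. -/
def IsSpanningTreeOn (n : ℕ) (s : Set (Finset (Fin n))) (E : Set (Sym2 (Finset (Fin n)))) : Prop :=
  E ⊆ (cube n).edgeSet ∧ (∀ e ∈ E, ∀ v ∈ e, v ∈ s) ∧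
    ((SimpleGraph.fromEdgeSet E).induce s).IsTree

/-- The edges of `T` with both endpoints in `s`. -/
def edgesWithin {n : ℕ} (s : Set (Finset (Fin n))) (T : SimpleGraph (Finset (Fin n))) :
    Set (Sym2 (Finset (Fin n))) :=
  {e | e ∈ T.edgeSet ∧ ∀ v ∈ e, v ∈ s}

/-- The edge `e` of the tree with edge set `E`, spanning the subgraph of the `n`-cube
induced on `s`, is `i`-slidable. -/
def SlidableOn (n : ℕ) (s : Set (Finset (Fin n))) (E : Set (Sym2 (Finset (Fin n))))
    (i : Fin n) (e : Sym2 (Finset (Fin n))) : Prop :=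
  e ∈ E ∧ IsSpanningTreeOn n s ((E \ {e}) ∪ {slideEdge i e})

/-- The number of edges of `T` in direction `i` with both endpoints in `s`. -/
noncomputable def dirCountOn {n : ℕ} (s : Set (Finset (Fin n)))
    (T : SimpleGraph (Finset (Fin n))) (i : Fin n) : ℕ :=
  {e | e ∈ T.edgeSet ∧ edgeInDir i e ∧ ∀ v ∈ e, v ∈ s}.ncard

/-- `T'` is a spanning tree of the `n`-cube obtained from the spanning tree `T` by a
single edge slide. -/
def SlideStep (n : ℕ) (T T' : SimpleGraph (Finset (Fin n))) : Prop :=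
  IsSpanningTreeOf T (cube n) ∧ IsSpanningTreeOf T' (cube n) ∧
    ∃ (i : Fin n) (e : Sym2 (Finset (Fin n))), e ∈ T.edgeSet ∧
      T' = SimpleGraph.fromEdgeSet ((T.edgeSet \ {e}) ∪ {slideEdge i e})

/-- The trees `T` and `T'` are related by a single edge slide. -/
def SlideAdj (n : ℕ) (T T' : SimpleGraph (Finset (Fin n))) : Prop :=
  T ≠ T' ∧ ∃ (i : Fin n) (e : Sym2 (Finset (Fin n))),
    (e ∈ T.edgeSet ∧ T' = SimpleGraph.fromEdgeSet ((T.edgeSet \ {e}) ∪ {slideEdge i e})) ∨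
    (e ∈ T'.edgeSet ∧ T = SimpleGraph.fromEdgeSet ((T'.edgeSet \ {e}) ∪ {slideEdge i e}))

/-- The spanning trees of the `n`-cube. -/
def SpanningTrees (n : ℕ) := {T : SimpleGraph (Finset (Fin n)) // IsSpanningTreeOf T (cube n)}

/-- The edge slide graph `E(n)` of the `n`-cube. -/
def eslide (n : ℕ) : SimpleGraph (SpanningTrees n) where
  Adj T T' := SlideAdj n T.1 T'.1
  symm := by
    constructor
    rintro T T' ⟨hne, i, e, h⟩
    exact ⟨hne.symm, i, e, h.symm⟩
  loopless := by
    constructor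
    rintro T ⟨hne, -⟩
    exact hne rfl

/-- The projection `π_R(T)` of `T` to `Q_R`: a graph on the subsets of `R`, with `A`
adjacent to `B` iff some edge of `T` projects to `{A, B}`. -/
def projTree (n : ℕ) (R : Finset (Fin n)) (T : SimpleGraph (Finset (Fin n))) :
    SimpleGraph ↥{W : Finset (Fin n) | W ⊆ R} where
  Adj A B := A.1 ≠ B.1 ∧ ∃ U V : Finset (Fin n), T.Adj U V ∧ U ∩ R = A.1 ∧ V ∩ R = B.1
  symm := by
    constructor
    rintro A B ⟨hne, U, V, hUV, hU, hV⟩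
    exact ⟨hne.symm, V, U, hUV.symm, hV, hU⟩
  loopless := by
    constructor
    rintro A ⟨hne, -⟩
    exact hne rfl

/-- The projected edge set `π_R(T)`: images under `π_R` of the edges of `T` in
directions belonging to `R`. -/
def projEdges {n : ℕ} (R : Finset (Fin n)) (T : SimpleGraph (Finset (Fin n))) :
    Set (Sym2 (Finset (Fin n))) :=
  {f | ∃ e ∈ T.edgeSet, (∃ i ∈ R, edgeInDir i e) ∧ f = Sym2.map (· ∩ R) e}

/-- The decomposition `T ↦ (F_T, (T(R,X))_{X ⊆ R})` of a tree reducing over `R`. -/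
def decompose (n : ℕ) (R : Finset (Fin n)) (T : SimpleGraph (Finset (Fin n))) :
    Set (Sym2 (Finset (Fin n))) ×
      ((X : Finset (Fin n)) → X ⊆ R → SimpleGraph ↥{W : Finset (Fin n) | W ∩ R = X}) :=
  ⟨{e | e ∈ T.edgeSet ∧ ∃ i ∈ R, edgeInDir i e},
   fun X _ => T.induce {W : Finset (Fin n) | W ∩ R = X}⟩

/-- `s` is the least index such that `ε_k(a) = 0` for all `s ≤ k ≤ n`; i.e. the
entries of (an ordered) `a` with index `≤ s` form the unsaturated part of `a`. -/
def UnsatIndex (n : ℕ) (a : Fin n → ℕ) (s : ℕ) : Prop :=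
  (∀ k, s ≤ k → k ≤ n → excess a k = 0) ∧
    ∀ s' < s, ¬ (∀ k, s' ≤ k → k ≤ n → excess a k = 0)

/-- The restriction of `a` to its first `s` entries is reducible (as a tuple of length `s`). -/
def ReducibleBelow {n : ℕ} (a : Fin n → ℕ) (s : ℕ) : Prop :=
  ∃ R : Finset (Fin n), R.Nonempty ∧ (∀ i ∈ R, (i : ℕ) < s) ∧ R.card < s ∧
    ∑ i ∈ R, a i = 2 ^ R.card - 1

/-- `a` is strictly reducible: it is reducible and its unsaturated part is reducible. -/
def StrictlyReducible (n : ℕ) (a : Fin n → ℕ) : Prop :=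
  IsReducibleSig a ∧
    ∃ (σ : Equiv.Perm (Fin n)) (s : ℕ), Monotone (a ∘ σ) ∧
      UnsatIndex n (a ∘ σ) s ∧ ReducibleBelow (a ∘ σ) s

section Basic
variable {n : ℕ}

lemma symmDiff_singleton_ne (X : Finset (Fin n)) (i : Fin n) : symmDiff X {i} ≠ X := by
  intro h
  have : i ∈ symmDiff X {i} ↔ i ∈ X := by rw [h]
  simp [Finset.mem_symmDiff] at this

lemma cube_adj {X Y : Finset (Fin n)} : (cube n).Adj X Y ↔ (symmDiff X Y).card = 1 := Iff.rfl

lemma cube_adj' {X Y : Finset (Fin n)} : (cube n).Adj X Y ↔ ∃ i, Y = symmDiff X {i} := by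
  constructor
  · intro h
    obtain ⟨i, hi⟩ := Finset.card_eq_one.mp h
    refine ⟨i, ?_⟩
    have := symmDiff_symmDiff_cancel_left X Y
    rw [hi] at this
    exact this.symm
  · rintro ⟨i, rfl⟩
    have : symmDiff X (symmDiff X {i}) = {i} := symmDiff_symmDiff_cancel_left X {i}
    rw [cube_adj, this, Finset.card_singleton]

lemma cube_adj_symmDiff (X : Finset (Fin n)) (i : Fin n) : (cube n).Adj X (symmDiff X {i}) :=
  cube_adj'.mpr ⟨i, rfl⟩

lemma edgeInDir_unique {i j : Fin n} {e : Sym2 (Finset (Fin n))}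
    (hi : edgeInDir i e) (hj : edgeInDir j e) : i = j := by
  obtain ⟨X, rfl⟩ := hi
  obtain ⟨Y, hY⟩ := hj
  have key : ({i} : Finset (Fin n)) = {j} := by
    rw [Sym2.eq_iff] at hY
    rcases hY with ⟨h1, h2⟩ | ⟨h1, h2⟩
    · subst h1
      exact symmDiff_right_injective X h2
    · subst h1
      apply symmDiff_right_injective (symmDiff Y {j})
      show symmDiff (symmDiff Y {j}) {i} = symmDiff (symmDiff Y {j}) {j}
      rw [h2, symmDiff_symmDiff_cancel_right]
  exact Finset.singleton_injective key

/-- every cube edge has a direction -/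
lemma exists_dir {e : Sym2 (Finset (Fin n))} (he : e ∈ (cube n).edgeSet) :
    ∃ i, edgeInDir i e := by
  induction e with
  | h X Y =>
    rw [SimpleGraph.mem_edgeSet, cube_adj'] at he
    obtain ⟨i, rfl⟩ := he
    exact ⟨i, X, rfl⟩

lemma edgeInDir_not_isDiag {i : Fin n} {e : Sym2 (Finset (Fin n))} (h : edgeInDir i e) :
    ¬ e.IsDiag := by
  obtain ⟨X, rfl⟩ := h
  rw [Sym2.isDiag_iff_proj_eq]
  exact fun h => symmDiff_singleton_ne X i h.symm

lemma edgeInDir_mem_cube {i : Fin n} {e : Sym2 (Finset (Fin n))} (h : edgeInDir i e) :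
    e ∈ (cube n).edgeSet := by
  obtain ⟨X, rfl⟩ := h
  exact cube_adj_symmDiff X i

end Basic

section Count
variable {α ι : Type*}

lemma ncard_biUnion_eq (A : Finset ι) (f : ι → Set α) (hfin : ∀ i ∈ A, (f i).Finite)
    (hdisj : ∀ i ∈ A, ∀ j ∈ A, i ≠ j → Disjoint (f i) (f j)) :
    (⋃ i ∈ A, f i).ncard = ∑ i ∈ A, (f i).ncard := by
  classical
  induction A using Finset.induction_on with
  | empty => simp
  | @insert a A ha ih =>
    rw [Finset.sum_insert ha]
    have hrest : (⋃ x ∈ A, f x).Finite :=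
      Set.Finite.biUnion A.finite_toSet (fun i hi => hfin i (Finset.mem_insert_of_mem hi))
    have hdis : Disjoint (f a) (⋃ x ∈ A, f x) := by
      rw [Set.disjoint_iff_forall_ne]
      rintro x hx y hy rfl
      simp only [Set.mem_iUnion] at hy
      obtain ⟨j, hj, hyj⟩ := hy
      exact Set.disjoint_iff_forall_ne.mp
        (hdisj a (Finset.mem_insert_self a A) j (Finset.mem_insert_of_mem hj)
          (by rintro rfl; exact ha hj)) hx hyj rfl
    rw [Finset.set_biUnion_insert,
      Set.ncard_union_eq hdis (hfin a (Finset.mem_insert_self a A)) hrest,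
      ih (fun i hi => hfin i (Finset.mem_insert_of_mem hi))
        (fun i hi j hj hij => hdisj i (Finset.mem_insert_of_mem hi) j
          (Finset.mem_insert_of_mem hj) hij)]

end Count

section Tree
variable {n : ℕ}

/-- edge count of a spanning tree of the cube -/
lemma tree_edge_count {T : SimpleGraph (Finset (Fin n))} (hT : T.IsTree) :
    T.edgeSet.ncard + 1 = 2 ^ n := by
  classical
  haveI : Fintype T.edgeSet := Fintype.ofFinite _
  have := hT.card_edgeFinset
  rw [Set.ncard_eq_toFinset_card' T.edgeSet]
  rwa [SimpleGraph.edgeFinset, Fintype.card_finset, Fintype.card_fin] at this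

lemma adj_card_parity {a c : Finset (Fin n)} (h : (cube n).Adj a c) :
    (a.card + c.card) % 2 = 1 := by
  have hadj : (symmDiff a c).card = 1 := h
  have h2 : symmDiff a c = (a ∪ c) \ (a ∩ c) := by
    ext x
    simp only [Finset.mem_symmDiff, Finset.mem_sdiff, Finset.mem_union, Finset.mem_inter]
    tauto
  have h3 : a ∩ c ⊆ a ∪ c := (Finset.inter_subset_left).trans Finset.subset_union_left
  have h4 := Finset.card_union_add_card_inter a c
  have h5 := Finset.card_le_card h3
  have h6 := Finset.card_sdiff_of_subset h3
  rw [h2, h6] at hadj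
  omega

/-- parity of walk lengths in a subgraph of the cube -/
lemma walk_length_parity {T : SimpleGraph (Finset (Fin n))} (hle : T ≤ cube n)
    {a b : Finset (Fin n)} (w : T.Walk a b) : (w.length + a.card + b.card) % 2 = 0 := by
  induction w with
  | nil => simp [Nat.add_assoc, ← Nat.two_mul, Nat.mul_mod_right]
  | @cons a c b h p ih =>
    have h1 : (a.card + c.card) % 2 = 1 := adj_card_parity (hle h)
    simp only [SimpleGraph.Walk.length_cons]
    omega

lemma dist_parity {T : SimpleGraph (Finset (Fin n))} (hle : T ≤ cube n) (hc : T.Connected)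
    (a : Finset (Fin n)) : (T.dist a ∅ + a.card) % 2 = 0 := by
  obtain ⟨w, hw⟩ := hc.exists_walk_length_eq_dist a ∅
  have := walk_length_parity hle w
  rw [hw] at this
  simpa using this

/-- adjacent vertices in a tree inside the cube have distances to ∅ differing by one -/
lemma adj_dist {T : SimpleGraph (Finset (Fin n))} (hle : T ≤ cube n) (hc : T.Connected)
    {a b : Finset (Fin n)} (h : T.Adj a b) :
    T.dist a ∅ = T.dist b ∅ + 1 ∨ T.dist b ∅ = T.dist a ∅ + 1 := by
  have h1 : T.dist a ∅ ≤ T.dist a b + T.dist b ∅ := hc.dist_triangle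
  have h2 : T.dist b ∅ ≤ T.dist b a + T.dist a ∅ := hc.dist_triangle
  have hab : T.dist a b = 1 := by
    rw [SimpleGraph.dist_eq_one_iff_adj]; exact h
  have hba : T.dist b a = 1 := by
    rw [SimpleGraph.dist_eq_one_iff_adj]; exact h.symm
  have hpa := dist_parity hle hc a
  have hpb := dist_parity hle hc b
  have hcard : (a.card + b.card) % 2 = 1 := adj_card_parity (hle h)
  omega

end Tree

section Parent
variable {n : ℕ}

lemma parent_unique {T : SimpleGraph (Finset (Fin n))} (hT : T.IsTree)
    {v u1 u2 : Finset (Fin n)} (h1 : T.Adj v u1) (h2 : T.Adj v u2)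
    (hd1 : T.dist u1 ∅ + 1 = T.dist v ∅) (hd2 : T.dist u2 ∅ + 1 = T.dist v ∅) :
    u1 = u2 := by
  have hc := hT.isConnected
  obtain ⟨p1, hp1⟩ := hc.exists_walk_length_eq_dist u1 ∅
  obtain ⟨p2, hp2⟩ := hc.exists_walk_length_eq_dist u2 ∅
  have hq1 : (SimpleGraph.Walk.cons h1 p1).IsPath := by
    apply SimpleGraph.Walk.isPath_of_length_eq_dist
    rw [SimpleGraph.Walk.length_cons, hp1, hd1]
  have hq2 : (SimpleGraph.Walk.cons h2 p2).IsPath := by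
    apply SimpleGraph.Walk.isPath_of_length_eq_dist
    rw [SimpleGraph.Walk.length_cons, hp2, hd2]
  have := hT.IsAcyclic.path_unique ⟨SimpleGraph.Walk.cons h1 p1, hq1⟩
    ⟨SimpleGraph.Walk.cons h2 p2, hq2⟩
  have heq : (SimpleGraph.Walk.cons h1 p1) = (SimpleGraph.Walk.cons h2 p2) :=
    congrArg Subtype.val this
  have := congrArg (fun w => SimpleGraph.Walk.getVert w 1) heq
  simpa using this

/-- predicate: `v` is the far endpoint ("child") of the edge `e` -/
def IsChild {n : ℕ} (T : SimpleGraph (Finset (Fin n))) (e : Sym2 (Finset (Fin n)))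
    (v : Finset (Fin n)) : Prop :=
  v ∈ e ∧ ∀ w ∈ e, w ≠ v → T.dist w ∅ + 1 = T.dist v ∅

open Classical in
noncomputable def childOf {n : ℕ} (T : SimpleGraph (Finset (Fin n)))
    (e : Sym2 (Finset (Fin n))) : Finset (Fin n) :=
  if h : ∃ v, IsChild T e v then h.choose else ∅

lemma child_exists {T : SimpleGraph (Finset (Fin n))} (hle : T ≤ cube n) (hT : T.IsTree)
    {e : Sym2 (Finset (Fin n))} (he : e ∈ T.edgeSet) : ∃ v, IsChild T e v := by
  induction e with
  | h u w =>
    rw [SimpleGraph.mem_edgeSet] at he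
    have hne : u ≠ w := he.ne
    rcases adj_dist hle hT.isConnected he with hd | hd
    · refine ⟨u, Sym2.mem_mk_left u w, ?_⟩
      intro x hx hxu
      rcases Sym2.mem_iff.mp hx with rfl | rfl
      · exact absurd rfl hxu
      · exact hd.symm
    · refine ⟨w, Sym2.mem_mk_right u w, ?_⟩
      intro x hx hxw
      rcases Sym2.mem_iff.mp hx with rfl | rfl
      · exact hd.symm
      · exact absurd rfl hxw

lemma isChild_unique {T : SimpleGraph (Finset (Fin n))} {e : Sym2 (Finset (Fin n))}
    {v v' : Finset (Fin n)} (h : IsChild T e v) (h' : IsChild T e v') : v = v' := by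
  by_contra hne
  have h1 := h.2 v' h'.1 (Ne.symm hne)
  have h2 := h'.2 v h.1 hne
  omega

lemma childOf_spec {T : SimpleGraph (Finset (Fin n))} (hle : T ≤ cube n) (hT : T.IsTree)
    {e : Sym2 (Finset (Fin n))} (he : e ∈ T.edgeSet) : IsChild T e (childOf T e) := by
  unfold childOf
  rw [dif_pos (child_exists hle hT he)]
  exact (child_exists hle hT he).choose_spec

/-- forest bound via the child injection -/
lemma within_card_le {T : SimpleGraph (Finset (Fin n))} (hle : T ≤ cube n) (hT : T.IsTree)
    {s : Set (Finset (Fin n))} (hs : s.Nonempty) :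
    {e | e ∈ T.edgeSet ∧ ∀ v ∈ e, v ∈ s}.ncard + 1 ≤ s.ncard := by
  classical
  obtain ⟨v0, hv0s, hv0min⟩ := Set.exists_min_image s (fun v => T.dist v ∅) s.toFinite hs
  have hmaps : ∀ e ∈ {e | e ∈ T.edgeSet ∧ ∀ v ∈ e, v ∈ s}, childOf T e ∈ s \ {v0} := by
    rintro e ⟨heT, hes⟩
    have hch := childOf_spec hle hT heT
    have hmem : childOf T e ∈ s := hes _ hch.1
    refine ⟨hmem, ?_⟩
    -- other endpoint
    obtain ⟨w, hw⟩ := Sym2.mem_iff_exists.mp hch.1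
    have hwne : w ≠ childOf T e := by
      intro hh
      rw [hh] at hw
      have : e ∈ T.edgeSet := heT
      rw [hw, SimpleGraph.mem_edgeSet] at this
      exact this.ne rfl
    have hwmem : w ∈ e := by rw [hw]; exact Sym2.mem_mk_right _ _
    have hdd := hch.2 w hwmem hwne
    intro hv0
    rw [Set.mem_singleton_iff] at hv0
    have := hv0min w (hes _ hwmem)
    rw [← hv0] at this
    omega
  have hinj : Set.InjOn (childOf T) {e | e ∈ T.edgeSet ∧ ∀ v ∈ e, v ∈ s} := by
    rintro e1 ⟨he1, -⟩ e2 ⟨he2, -⟩ heq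
    have hc1 := childOf_spec hle hT he1
    have hc2 := childOf_spec hle hT he2
    rw [← heq] at hc2
    obtain ⟨u1, hu1⟩ := Sym2.mem_iff_exists.mp hc1.1
    obtain ⟨u2, hu2⟩ := Sym2.mem_iff_exists.mp hc2.1
    have ha1 : T.Adj (childOf T e1) u1 := by
      rw [hu1, SimpleGraph.mem_edgeSet] at he1; exact he1
    have ha2 : T.Adj (childOf T e1) u2 := by
      rw [hu2, SimpleGraph.mem_edgeSet] at he2; exact he2
    have hu1ne : u1 ≠ childOf T e1 := fun hh => (hh ▸ ha1).ne rfl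
    have hu2ne : u2 ≠ childOf T e1 := fun hh => (hh ▸ ha2).ne rfl
    have hd1 := hc1.2 u1 (by rw [hu1]; exact Sym2.mem_mk_right _ _) hu1ne
    have hd2 := hc2.2 u2 (by rw [hu2]; exact Sym2.mem_mk_right _ _) hu2ne
    rw [hu1, hu2, parent_unique hT ha1 ha2 hd1 hd2]
  have hle' := Set.ncard_le_ncard_of_injOn (childOf T) hmaps hinj (Set.toFinite _)
  have hdiff : (s \ {v0}).ncard + 1 = s.ncard := by
    rw [Set.ncard_diff_singleton_add_one hv0s (Set.toFinite _)]
  omega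

end Parent

section Fiber
variable {n : ℕ} {R : Finset (Fin n)}

def fiber (R X : Finset (Fin n)) : Set (Finset (Fin n)) := {W | W ∩ R = X}

def within (R X : Finset (Fin n)) (T : SimpleGraph (Finset (Fin n))) :
    Set (Sym2 (Finset (Fin n))) :=
  {e | e ∈ T.edgeSet ∧ ∀ v ∈ e, v ∈ fiber R X}

lemma inter_symmDiff_singleton_mem (U : Finset (Fin n)) {j : Fin n} (hj : j ∈ R) :
    (symmDiff U {j}) ∩ R = symmDiff (U ∩ R) {j} := by
  have h1 : (symmDiff U {j}) ∩ R = symmDiff (U ∩ R) ({j} ∩ R) := inf_symmDiff_distrib_right U {j} R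
  rw [h1, Finset.singleton_inter_of_mem hj]

lemma inter_symmDiff_singleton_not_mem (U : Finset (Fin n)) {j : Fin n} (hj : j ∉ R) :
    (symmDiff U {j}) ∩ R = U ∩ R := by
  have h1 : (symmDiff U {j}) ∩ R = symmDiff (U ∩ R) ({j} ∩ R) := inf_symmDiff_distrib_right U {j} R
  rw [h1, Finset.singleton_inter_of_notMem hj]
  simp [symmDiff_bot]

/-- an edge in a direction outside `R` lies within the fiber of its endpoint -/
lemma edge_mem_fiber {U : Finset (Fin n)} {j : Fin n} (hj : j ∉ R) :
    ∀ v ∈ s(U, symmDiff U {j}), v ∈ fiber R (U ∩ R) := by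
  intro v hv
  rcases Sym2.mem_iff.mp hv with rfl | rfl
  · rfl
  · exact inter_symmDiff_singleton_not_mem U hj

/-- an edge in a direction inside `R` lies within no fiber -/
lemma edge_not_mem_fiber {U X : Finset (Fin n)} {j : Fin n} (hj : j ∈ R) :
    ¬ ∀ v ∈ s(U, symmDiff U {j}), v ∈ fiber R X := by
  intro h
  have h1 : U ∩ R = X := h U (Sym2.mem_mk_left _ _)
  have h2 : (symmDiff U {j}) ∩ R = X := h _ (Sym2.mem_mk_right _ _)
  rw [inter_symmDiff_singleton_mem U hj, h1] at h2
  exact symmDiff_singleton_ne X j h2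

lemma fiber_ncard {X : Finset (Fin n)} (hX : X ⊆ R) :
    (fiber R X).ncard = 2 ^ (n - R.card) := by
  classical
  have himg : fiber R X = (fun Y => X ∪ Y) '' {Y : Finset (Fin n) | Y ⊆ Finset.univ \ R} := by
    ext W
    simp only [fiber, Set.mem_setOf_eq, Set.mem_image]
    constructor
    · intro hW
      refine ⟨W \ R, ?_, ?_⟩
      · intro x hx
        simp only [Finset.mem_sdiff] at hx ⊢
        exact ⟨Finset.mem_univ x, hx.2⟩
      · rw [← hW]
        ext x
        simp only [Finset.mem_union, Finset.mem_inter, Finset.mem_sdiff]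
        tauto
    · rintro ⟨Y, hY, rfl⟩
      have hYR : ∀ x ∈ Y, x ∉ R := by
        intro x hx
        have := hY hx
        simp only [Finset.mem_sdiff] at this
        exact this.2
      ext x
      simp only [Finset.mem_inter, Finset.mem_union]
      constructor
      · rintro ⟨hx1 | hx1, hx2⟩
        · exact hx1
        · exact absurd hx2 (hYR x hx1)
      · intro hx
        exact ⟨Or.inl hx, hX hx⟩
  have hinj : Set.InjOn (fun Y => X ∪ Y) {Y : Finset (Fin n) | Y ⊆ Finset.univ \ R} := by
    intro Y1 h1 Y2 h2 heq
    simp only [Set.mem_setOf_eq] at h1 h2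
    have hd : ∀ (Y : Finset (Fin n)), Y ⊆ Finset.univ \ R → (X ∪ Y) \ R = Y := by
      intro Y hY
      ext x
      simp only [Finset.mem_sdiff, Finset.mem_union]
      constructor
      · rintro ⟨hx1 | hx1, hx2⟩
        · exact absurd (hX hx1) hx2
        · exact hx1
      · intro hx
        have := hY hx
        simp only [Finset.mem_sdiff] at this
        exact ⟨Or.inr hx, this.2⟩
    simp only at heq
    rw [← hd Y1 h1, ← hd Y2 h2, heq]
  rw [himg, Set.ncard_image_of_injOn hinj]
  have hset : {Y : Finset (Fin n) | Y ⊆ Finset.univ \ R} =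
      ↑((Finset.univ \ R).powerset) := by
    ext Y
    simp only [Set.mem_setOf_eq, Finset.coe_powerset, Set.mem_preimage, Set.mem_powerset_iff,
      Finset.coe_subset, Finset.mem_coe, Finset.mem_powerset]
  rw [hset, Set.ncard_coe_finset, Finset.card_powerset, Finset.card_sdiff_of_subset (Finset.subset_univ R)]
  simp

lemma sum_dirCount {T : SimpleGraph (Finset (Fin n))} (hT : IsSpanningTreeOf T (cube n)) :
    ∑ i : Fin n, dirCount T i + 1 = 2 ^ n := by
  have hpart : T.edgeSet = ⋃ i ∈ (Finset.univ : Finset (Fin n)),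
      {e | e ∈ T.edgeSet ∧ edgeInDir i e} := by
    ext e
    simp only [Set.mem_iUnion, Set.mem_setOf_eq, Finset.mem_univ, exists_true_left]
    constructor
    · intro he
      obtain ⟨i, hi⟩ := exists_dir (SimpleGraph.edgeSet_subset_edgeSet.mpr hT.1 he)
      exact ⟨i, he, hi⟩
    · rintro ⟨i, he, -⟩
      exact he
  have hcount := ncard_biUnion_eq (Finset.univ : Finset (Fin n))
    (fun i => {e | e ∈ T.edgeSet ∧ edgeInDir i e})
    (fun i _ => Set.toFinite _)
    (fun i _ j _ hij => by
      rw [Set.disjoint_iff_forall_ne]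
      rintro e ⟨-, hei⟩ e' ⟨-, hej⟩ rfl
      exact hij (edgeInDir_unique hei hej))
  rw [← hpart] at hcount
  have h2 : ∑ i : Fin n, dirCount T i = T.edgeSet.ncard := by rw [hcount]; rfl
  rw [h2]
  exact tree_edge_count hT.2

lemma fiber_count {T : SimpleGraph (Finset (Fin n))} (hT : IsSpanningTreeOf T (cube n))
    (hred : ReducesOver (fun i => dirCount T i) R) {X : Finset (Fin n)} (hX : X ⊆ R) :
    (within R X T).ncard = 2 ^ (n - R.card) - 1 := by
  classical
  have hRn : R.card ≤ n := by
    have := Finset.card_le_univ R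
    simpa using this
  have h2R : (2:ℕ) ^ R.card ≤ 2 ^ n := Nat.pow_le_pow_right (by norm_num) hRn
  have h1R : (1:ℕ) ≤ 2 ^ R.card := Nat.one_le_two_pow
  have htot := sum_dirCount hT
  have hsplit := Finset.sum_sdiff (f := fun i => dirCount T i) (Finset.subset_univ R)
  beta_reduce at hsplit
  have hsum_R : ∑ i ∈ R, dirCount T i = 2 ^ R.card - 1 := hred
  have hsum_out : ∑ i ∈ Finset.univ \ R, dirCount T i = 2 ^ n - 2 ^ R.card := by omega
  -- the union over directions outside R equals the union over fibers
  have hWeq : (⋃ i ∈ Finset.univ \ R, {e | e ∈ T.edgeSet ∧ edgeInDir i e}) =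
      ⋃ X' ∈ R.powerset, within R X' T := by
    ext e
    simp only [Set.mem_iUnion, Set.mem_setOf_eq, Finset.mem_sdiff, Finset.mem_univ, true_and,
      Finset.mem_powerset, exists_prop]
    constructor
    · rintro ⟨i, hiR, he, U, rfl⟩
      exact ⟨U ∩ R, Finset.inter_subset_right, he, edge_mem_fiber hiR⟩
    · rintro ⟨X', hX', he, hfib⟩
      obtain ⟨j, hj⟩ := exists_dir (SimpleGraph.edgeSet_subset_edgeSet.mpr hT.1 he)
      obtain ⟨U, rfl⟩ := hj
      by_cases hjR : j ∈ R
      · exact absurd hfib (edge_not_mem_fiber hjR)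
      · exact ⟨j, hjR, he, U, rfl⟩
  have hcard1 := ncard_biUnion_eq (Finset.univ \ R)
    (fun i => {e | e ∈ T.edgeSet ∧ edgeInDir i e})
    (fun i _ => Set.toFinite _)
    (fun i _ j _ hij => by
      rw [Set.disjoint_iff_forall_ne]
      rintro e ⟨-, hei⟩ e' ⟨-, hej⟩ rfl
      exact hij (edgeInDir_unique hei hej))
  have hcard2 := ncard_biUnion_eq R.powerset (fun X' => within R X' T)
    (fun X' _ => Set.toFinite _)
    (fun X1 _ X2 _ hX12 => by
      rw [Set.disjoint_iff_forall_ne]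
      rintro e ⟨he1, hf1⟩ e' ⟨he2, hf2⟩ rfl
      obtain ⟨j, U, rfl⟩ := exists_dir (SimpleGraph.edgeSet_subset_edgeSet.mpr hT.1 he1)
      have h1 : U ∩ R = X1 := hf1 U (Sym2.mem_mk_left _ _)
      have h2 : U ∩ R = X2 := hf2 U (Sym2.mem_mk_left _ _)
      exact hX12 (h1 ▸ h2))
  beta_reduce at hcard1 hcard2
  rw [hWeq] at hcard1
  have hsum_fib : ∑ X' ∈ R.powerset, (within R X' T).ncard = 2 ^ n - 2 ^ R.card := by
    rw [← hcard2, hcard1]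
    exact hsum_out
  -- bound for each fiber
  have hbound : ∀ X' ∈ R.powerset, (within R X' T).ncard + 1 ≤ 2 ^ (n - R.card) := by
    intro X' hX'
    rw [Finset.mem_powerset] at hX'
    have hne : (fiber R X').Nonempty := ⟨X', Finset.inter_eq_left.mpr hX'⟩
    have := within_card_le hT.1 hT.2 hne
    rwa [fiber_ncard hX'] at this
  -- squeeze
  set B := 2 ^ (n - R.card) with hB
  have hB1 : 1 ≤ B := Nat.one_le_two_pow
  obtain ⟨B', hB'⟩ : ∃ B', B = B' + 1 := ⟨B - 1, by omega⟩
  have hBtot : 2 ^ R.card * B = 2 ^ n := by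
    rw [hB, ← pow_add]
    congr 1
    omega
  rw [hB'] at hBtot
  rw [mul_add, mul_one] at hBtot
  have hcardpow : R.powerset.card = 2 ^ R.card := Finset.card_powerset R
  by_contra hcon
  have hXmem : X ∈ R.powerset := Finset.mem_powerset.mpr hX
  have hlt : (within R X T).ncard < B' := by
    have := hbound X hXmem
    omega
  have hstrict : ∑ X' ∈ R.powerset, (within R X' T).ncard <
      ∑ _X' ∈ R.powerset, B' := by
    apply Finset.sum_lt_sum (fun X' hX' => by have := hbound X' hX'; omega) ⟨X, hXmem, hlt⟩
  rw [Finset.sum_const, smul_eq_mul, hcardpow, hsum_fib] at hstrict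
  omega

lemma slideEdge_dir {i j : Fin n} {e : Sym2 (Finset (Fin n))} (h : edgeInDir j e) :
    edgeInDir j (slideEdge i e) := by
  obtain ⟨X, rfl⟩ := h
  refine ⟨symmDiff X {i}, ?_⟩
  have h : symmDiff (symmDiff X {j}) {i} = symmDiff (symmDiff X {i}) {j} := by
    rw [symmDiff_assoc, symmDiff_assoc, symmDiff_comm ({j} : Finset (Fin n)) {i}]
  rw [slideEdge, Sym2.map_pair_eq, h]

lemma slideEdge_self {j : Fin n} (U : Finset (Fin n)) :
    slideEdge j s(U, symmDiff U {j}) = s(U, symmDiff U {j}) := by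
  rw [slideEdge, Sym2.map_pair_eq, symmDiff_symmDiff_cancel_right, Sym2.eq_swap]

lemma slideEdge_ne {i j : Fin n} (hij : i ≠ j) (U : Finset (Fin n)) :
    slideEdge i s(U, symmDiff U {j}) ≠ s(U, symmDiff U {j}) := by
  rw [slideEdge, Sym2.map_pair_eq]
  intro hcon
  rw [Sym2.eq_iff] at hcon
  rcases hcon with ⟨h1, -⟩ | ⟨h1, h2⟩
  · exact symmDiff_singleton_ne U i h1
  · -- symmDiff U {i} = symmDiff U {j} gives i = j
    have := symmDiff_right_injective U h1
    exact hij (Finset.singleton_injective this)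

/-- the two set-rewriting helpers -/
lemma slide_set_eq_of_not {α : Type*} {E : Set α} {e f : α} (P : α → Prop)
    (hPe : ¬ P e) (hPf : ¬ P f) :
    {g | g ∈ (E \ {e}) ∪ {f} ∧ P g} = {g | g ∈ E ∧ P g} := by
  ext g
  simp only [Set.mem_setOf_eq, Set.mem_union, Set.mem_diff, Set.mem_singleton_iff]
  constructor
  · rintro ⟨⟨hg, -⟩ | rfl, hP⟩
    · exact ⟨hg, hP⟩
    · exact absurd hP hPf
  · rintro ⟨hg, hP⟩
    exact ⟨Or.inl ⟨hg, fun hh => hPe (hh ▸ hP)⟩, hP⟩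

lemma slide_set_eq_insert {α : Type*} {E : Set α} {e f : α} (P : α → Prop) (hPf : P f) :
    {g | g ∈ (E \ {e}) ∪ {f} ∧ P g} = insert f ({g | g ∈ E ∧ P g} \ {e}) := by
  ext g
  simp only [Set.mem_setOf_eq, Set.mem_union, Set.mem_diff, Set.mem_singleton_iff,
    Set.mem_insert_iff]
  constructor
  · rintro ⟨⟨hg, hne⟩ | rfl, hP⟩
    · exact Or.inr ⟨⟨hg, hP⟩, hne⟩
    · exact Or.inl rfl
  · rintro (rfl | ⟨⟨hg, hP⟩, hne⟩)
    · exact ⟨Or.inr rfl, hPf⟩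
    · exact ⟨Or.inl ⟨hg, hne⟩, hP⟩

lemma edgeSet_slide {A : SimpleGraph (Finset (Fin n))} (hA : A ≤ cube n)
    {e f : Sym2 (Finset (Fin n))} (hf : ¬ f.IsDiag) :
    (SimpleGraph.fromEdgeSet ((A.edgeSet \ {e}) ∪ {f})).edgeSet
      = (A.edgeSet \ {e}) ∪ {f} := by
  rw [SimpleGraph.edgeSet_fromEdgeSet]
  apply sdiff_eq_left.mpr
  rw [Set.disjoint_left]
  rintro g (⟨hg, -⟩ | hg)
  · intro hd
    exact SimpleGraph.not_isDiag_of_mem_edgeSet _ (SimpleGraph.edgeSet_subset_edgeSet.mpr hA hg) hd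
  · rw [Set.mem_singleton_iff] at hg
    subst hg
    exact fun hd => hf hd

lemma slide_step_preserves {R : Finset (Fin n)} (hR2 : R ≠ Finset.univ)
    {A B : SimpleGraph (Finset (Fin n))} (hstep : SlideStep n A B)
    (hredA : ReducesOver (fun i => dirCount A i) R) :
    (∀ j', dirCount B j' = dirCount A j') ∧
      ∀ X, X ⊆ R → ∀ i', i' ∉ R →
        dirCountOn (fiber R X) B i' = dirCountOn (fiber R X) A i' := by
  classical
  obtain ⟨hA, hB, i, e0, heA, hBdef⟩ := hstep
  obtain ⟨j, U, rfl⟩ := exists_dir (SimpleGraph.edgeSet_subset_edgeSet.mpr hA.1 heA)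
  by_cases hij : i = j
  · subst hij
    have hBA : B = A := by
      rw [hBdef, slideEdge_self, Set.diff_union_self,
        Set.union_eq_self_of_subset_right (Set.singleton_subset_iff.mpr heA),
        SimpleGraph.fromEdgeSet_edgeSet]
    rw [hBA]
    exact ⟨fun _ => rfl, fun _ _ _ _ => rfl⟩
  · have hed : edgeInDir j s(U, symmDiff U {j}) := ⟨U, rfl⟩
    set f := slideEdge i s(U, symmDiff U {j}) with hf
    have hfd : edgeInDir j f := slideEdge_dir hed
    have hfe : f ≠ s(U, symmDiff U {j}) := slideEdge_ne hij U
    have hfdiag : ¬ f.IsDiag := edgeInDir_not_isDiag hfd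
    have hfform : f = s(symmDiff U {i}, symmDiff (symmDiff U {j}) {i}) := by
      rw [hf, slideEdge, Sym2.map_pair_eq]
    have hEcard : A.edgeSet.ncard + 1 = 2 ^ n := tree_edge_count hA.2
    have hfnotA : f ∉ A.edgeSet := by
      intro hfA
      have h1 : (A.edgeSet \ {s(U, symmDiff U {j})}) ∪ {f}
          = A.edgeSet \ {s(U, symmDiff U {j})} := by
        apply Set.union_eq_self_of_subset_right
        rw [Set.singleton_subset_iff]
        exact ⟨hfA, hfe⟩
      have hBedge : B.edgeSet = A.edgeSet \ {s(U, symmDiff U {j})} := by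
        rw [hBdef, edgeSet_slide hA.1 hfdiag, h1]
      have hcardB := tree_edge_count hB.2
      rw [hBedge] at hcardB
      have hdd : (A.edgeSet \ {s(U, symmDiff U {j})}).ncard + 1 = A.edgeSet.ncard :=
        Set.ncard_diff_singleton_add_one heA (Set.toFinite _)
      omega
    have hBedge : B.edgeSet = (A.edgeSet \ {s(U, symmDiff U {j})}) ∪ {f} := by
      rw [hBdef]
      exact edgeSet_slide hA.1 hfdiag
    have hsig : ∀ j', dirCount B j' = dirCount A j' := by
      intro j'
      unfold dirCount
      rw [hBedge]
      by_cases hj' : j' = j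
      · have hed' : edgeInDir j' s(U, symmDiff U {j}) := hj' ▸ hed
        have hfd' : edgeInDir j' f := hj' ▸ hfd
        have hseteq : {g | g ∈ (A.edgeSet \ {s(U, symmDiff U {j})}) ∪ {f} ∧ edgeInDir j' g}
            = insert f ({g | g ∈ A.edgeSet ∧ edgeInDir j' g} \ {s(U, symmDiff U {j})}) :=
          slide_set_eq_insert _ hfd'
        rw [hseteq]
        exact Set.ncard_exchange (fun hh => hfnotA hh.1) ⟨heA, hed'⟩
      · have hseteq : {g | g ∈ (A.edgeSet \ {s(U, symmDiff U {j})}) ∪ {f} ∧ edgeInDir j' g}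
            = {g | g ∈ A.edgeSet ∧ edgeInDir j' g} :=
          slide_set_eq_of_not _ (fun hh => hj' (edgeInDir_unique hh hed))
            (fun hh => hj' (edgeInDir_unique hh hfd))
        rw [hseteq]
    refine ⟨hsig, ?_⟩
    intro X hX i' hi'
    unfold dirCountOn
    rw [hBedge]
    by_cases hjR : j ∈ R
    · have hi'j : i' ≠ j := fun hh => hi' (hh ▸ hjR)
      have hseteq : {g | g ∈ (A.edgeSet \ {s(U, symmDiff U {j})}) ∪ {f} ∧
            edgeInDir i' g ∧ ∀ v ∈ g, v ∈ fiber R X}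
          = {g | g ∈ A.edgeSet ∧ edgeInDir i' g ∧ ∀ v ∈ g, v ∈ fiber R X} :=
        slide_set_eq_of_not _ (fun hh => hi'j (edgeInDir_unique hh.1 hed))
          (fun hh => hi'j (edgeInDir_unique hh.1 hfd))
      rw [hseteq]
    · by_cases hiR : i ∈ R
      · exfalso
        have hredB : ReducesOver (fun i0 => dirCount B i0) R := by
          unfold ReducesOver at hredA ⊢
          calc ∑ i0 ∈ R, dirCount B i0 = ∑ i0 ∈ R, dirCount A i0 :=
                Finset.sum_congr rfl (fun x _ => hsig x)
            _ = 2 ^ R.card - 1 := hredA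
        have hwA := fiber_count hA hredA (X := U ∩ R) Finset.inter_subset_right
        have hwB := fiber_count hB hredB (X := U ∩ R) Finset.inter_subset_right
        have hBwithin : within R (U ∩ R) B
            = within R (U ∩ R) A \ {s(U, symmDiff U {j})} := by
          unfold within
          rw [hBedge]
          ext g
          simp only [Set.mem_setOf_eq, Set.mem_union, Set.mem_diff, Set.mem_singleton_iff]
          constructor
          · rintro ⟨⟨hg, hne⟩ | rfl, hfib⟩
            · exact ⟨⟨hg, hfib⟩, hne⟩
            · exfalso
              have hm : symmDiff U {i} ∈ f := by
                rw [hfform]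
                exact Sym2.mem_mk_left _ _
              have h1 : (symmDiff U {i}) ∩ R = U ∩ R := hfib _ hm
              rw [inter_symmDiff_singleton_mem U hiR] at h1
              exact symmDiff_singleton_ne (U ∩ R) i h1
          · rintro ⟨⟨hg, hfib⟩, hne⟩
            exact ⟨Or.inl ⟨hg, hne⟩, hfib⟩
        have heW : s(U, symmDiff U {j}) ∈ within R (U ∩ R) A := ⟨heA, edge_mem_fiber hjR⟩
        have hcard : (within R (U ∩ R) A \ {s(U, symmDiff U {j})}).ncard + 1
            = (within R (U ∩ R) A).ncard :=
          Set.ncard_diff_singleton_add_one heW (Set.toFinite _)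
        have hRn : R.card < n := by
          have := Finset.card_lt_card (Finset.ssubset_univ_iff.mpr hR2)
          simpa using this
        have h2 : 2 ≤ 2 ^ (n - R.card) := by
          calc (2:ℕ) = 2 ^ 1 := rfl
            _ ≤ 2 ^ (n - R.card) := Nat.pow_le_pow_right (by norm_num) (by omega)
        rw [hBwithin] at hwB
        omega
      · -- i ∉ R, j ∉ R, i ≠ j
        have hffib : ∀ v ∈ f, v ∈ fiber R (U ∩ R) := by
          rw [hfform]
          intro v hv
          rcases Sym2.mem_iff.mp hv with rfl | rfl
          · exact inter_symmDiff_singleton_not_mem U hiR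
          · show (symmDiff (symmDiff U {j}) {i}) ∩ R = U ∩ R
            rw [inter_symmDiff_singleton_not_mem _ hiR, inter_symmDiff_singleton_not_mem U hjR]
        by_cases hi'j : i' = j
        · have hed' : edgeInDir i' s(U, symmDiff U {j}) := hi'j ▸ hed
          have hfd' : edgeInDir i' f := hi'j ▸ hfd
          by_cases hXe : X = U ∩ R
          · subst hXe
            have hseteq : {g | g ∈ (A.edgeSet \ {s(U, symmDiff U {j})}) ∪ {f} ∧
                  edgeInDir i' g ∧ ∀ v ∈ g, v ∈ fiber R (U ∩ R)}
                = insert f ({g | g ∈ A.edgeSet ∧ edgeInDir i' g ∧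
                    ∀ v ∈ g, v ∈ fiber R (U ∩ R)} \ {s(U, symmDiff U {j})}) :=
              slide_set_eq_insert _ ⟨hfd', hffib⟩
            rw [hseteq]
            exact Set.ncard_exchange (fun hh => hfnotA hh.1)
              ⟨heA, hed', edge_mem_fiber hjR⟩
          · have hseteq : {g | g ∈ (A.edgeSet \ {s(U, symmDiff U {j})}) ∪ {f} ∧
                  edgeInDir i' g ∧ ∀ v ∈ g, v ∈ fiber R X}
                = {g | g ∈ A.edgeSet ∧ edgeInDir i' g ∧ ∀ v ∈ g, v ∈ fiber R X} :=
              slide_set_eq_of_not _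
                (fun hh => hXe ((hh.2 U (Sym2.mem_mk_left _ _)).symm))
                (fun hh => hXe (by
                  have hm : symmDiff U {i} ∈ f := by
                    rw [hfform]
                    exact Sym2.mem_mk_left _ _
                  have h1 : (symmDiff U {i}) ∩ R = X := hh.2 _ hm
                  rw [inter_symmDiff_singleton_not_mem U hiR] at h1
                  exact h1.symm))
            rw [hseteq]
        · have hseteq : {g | g ∈ (A.edgeSet \ {s(U, symmDiff U {j})}) ∪ {f} ∧
                edgeInDir i' g ∧ ∀ v ∈ g, v ∈ fiber R X}
              = {g | g ∈ A.edgeSet ∧ edgeInDir i' g ∧ ∀ v ∈ g, v ∈ fiber R X} :=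
            slide_set_eq_of_not _ (fun hh => hi'j (edgeInDir_unique hh.1 hed))
              (fun hh => hi'j (edgeInDir_unique hh.1 hfd))
          rw [hseteq]

/-- Corollary: subcube signatures are slide invariants. If the
spanning tree `T` of `Q_n` reduces over `R` and `T'` is obtained from `T` by a finite
sequence of edge slides, then for all `X ⊆ R` and all directions `i ∉ R` the number of
edges of `T'(R,X)` in direction `i` equals that of `T(R,X)`. -/
theorem stmt14 (n : ℕ) (R : Finset (Fin n)) (hR1 : R.Nonempty) (hR2 : R ≠ Finset.univ)
    (T T' : SimpleGraph (Finset (Fin n))) (hT : IsSpanningTreeOf T (cube n))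
    (hred : ReducesOver (fun i => dirCount T i) R)
    (hslides : Relation.ReflTransGen (SlideStep n) T T') :
    ∀ X ⊆ R, ∀ i, i ∉ R →
      dirCountOn {W : Finset (Fin n) | W ∩ R = X} T' i =
        dirCountOn {W : Finset (Fin n) | W ∩ R = X} T i := by
  have key : ∀ T'', Relation.ReflTransGen (SlideStep n) T T'' →
      ReducesOver (fun i => dirCount T'' i) R ∧
        ∀ X, X ⊆ R → ∀ i, i ∉ R →
          dirCountOn (fiber R X) T'' i = dirCountOn (fiber R X) T i := by
    intro T'' h
    induction h with
    | refl => exact ⟨hred, fun _ _ _ _ => rfl⟩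
    | tail hab hbc ih =>
      obtain ⟨ih1, ih2⟩ := ih
      have hpres := slide_step_preserves hR2 hbc ih1
      constructor
      · unfold ReducesOver at ih1 ⊢
        rw [Finset.sum_congr rfl (fun x _ => hpres.1 x)]
        exact ih1
      · intro X hx i hi
        rw [hpres.2 X hx i hi, ih2 X hx i hi]
  intro X hX i hi
  exact (key T' hslides).2 X hX i hi
end Fiber
end

section
/- Let n ≥ 2. The subgraph of the edge slide graph E(n) induced by the set of spanning trees of Q_n that reduce over {1} is isomorphic, as a graph, to the Cartesian (box) product Q_{n−1} □ E(n−1) □ E(n−1), where Q_{n−1} is the (n−1)-cube graph and E(n−1) is the edge slide graph of Q_{n−1}. -/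
open SimpleGraph

namespace Stmt15

open Finset

variable {m : ℕ}

/-- Embed a subset of `Fin m` as a subset of `Fin (m+1)` avoiding `0`. -/
def up (X : Finset (Fin m)) : Finset (Fin (m + 1)) := X.image Fin.succ

/-- Project a subset of `Fin (m+1)` down to `Fin m` (forgetting `0`). -/
def down (Y : Finset (Fin (m + 1))) : Finset (Fin m) :=
  Finset.univ.filter (fun j => j.succ ∈ Y)

/-- The two layers of the `(m+1)`-cube. -/
def lift (b : Bool) (X : Finset (Fin m)) : Finset (Fin (m + 1)) :=
  if b then insert 0 (up X) else up X

lemma succ_mem_up {j : Fin m} {X : Finset (Fin m)} : j.succ ∈ up X ↔ j ∈ X := by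
  simp [up, Fin.succ_inj]

lemma zero_not_mem_up {X : Finset (Fin m)} : (0 : Fin (m + 1)) ∉ up X := by
  simp only [up, mem_image]
  rintro ⟨j, -, h⟩
  exact Fin.succ_ne_zero j h

lemma zero_mem_lift {b : Bool} {X : Finset (Fin m)} :
    ((0 : Fin (m + 1)) ∈ lift b X) ↔ b = true := by
  cases b <;> simp [lift, zero_not_mem_up]

lemma succ_mem_lift {b : Bool} {j : Fin m} {X : Finset (Fin m)} :
    j.succ ∈ lift b X ↔ j ∈ X := by
  cases b <;> simp [lift, succ_mem_up, (Fin.succ_ne_zero j)]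

lemma lift_injective (b : Bool) : Function.Injective (lift (m := m) b) := by
  intro X Y h
  ext j
  rw [← succ_mem_lift (b := b), h, succ_mem_lift]

lemma down_lift {b : Bool} {X : Finset (Fin m)} : down (lift b X) = X := by
  ext j; simp [down, succ_mem_lift]

lemma lift_down {b : Bool} {Y : Finset (Fin (m + 1))}
    (h : (0 : Fin (m + 1)) ∈ Y ↔ b = true) : lift b (down Y) = Y := by
  ext x
  rcases Fin.eq_zero_or_eq_succ x with rfl | ⟨j, rfl⟩
  · rw [zero_mem_lift, ← h]
  · simp [succ_mem_lift, down]

lemma lift_symmDiff {b : Bool} {X : Finset (Fin m)} {j : Fin m} :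
    lift b (symmDiff X {j}) = symmDiff (lift b X) {j.succ} := by
  ext x
  rcases Fin.eq_zero_or_eq_succ x with rfl | ⟨i, rfl⟩
  · simp [Finset.mem_symmDiff, zero_mem_lift, (Fin.succ_ne_zero j).symm]
  · simp [Finset.mem_symmDiff, succ_mem_lift, Fin.succ_inj]

lemma symmDiff_lift_lift {b : Bool} {X Y : Finset (Fin m)} :
    symmDiff (lift b X) (lift b Y) = up (symmDiff X Y) := by
  ext x
  rcases Fin.eq_zero_or_eq_succ x with rfl | ⟨i, rfl⟩
  · simp [Finset.mem_symmDiff, zero_mem_lift, zero_not_mem_up]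
  · simp [Finset.mem_symmDiff, succ_mem_lift, succ_mem_up]

lemma cube_adj {n : ℕ} {X Y : Finset (Fin n)} :
    (cube n).Adj X Y ↔ (symmDiff X Y).card = 1 := Iff.rfl

lemma adj_lift_iff {b : Bool} {X Y : Finset (Fin m)} :
    (cube (m + 1)).Adj (lift b X) (lift b Y) ↔ (cube m).Adj X Y := by
  rw [cube_adj, cube_adj, symmDiff_lift_lift, up,
    Finset.card_image_of_injective _ (Fin.succ_injective m)]

/-- The bridge edge over `X`. -/
def bridgeAt (X : Finset (Fin m)) : Sym2 (Finset (Fin (m + 1))) :=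
  s(lift false X, lift true X)

lemma lift_true_eq {X : Finset (Fin m)} : lift true X = insert 0 (lift false X) := by
  simp [lift]

lemma symmDiff_zero_false {X : Finset (Fin m)} :
    symmDiff (lift false X) {(0 : Fin (m+1))} = lift true X := by
  ext x
  rcases Fin.eq_zero_or_eq_succ x with rfl | ⟨i, rfl⟩
  · simp [Finset.mem_symmDiff, zero_mem_lift]
  · simp [Finset.mem_symmDiff, succ_mem_lift, (Fin.succ_ne_zero i)]

lemma symmDiff_zero_true {X : Finset (Fin m)} :
    symmDiff (lift true X) {(0 : Fin (m+1))} = lift false X := by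
  ext x
  rcases Fin.eq_zero_or_eq_succ x with rfl | ⟨i, rfl⟩
  · simp [Finset.mem_symmDiff, zero_mem_lift]
  · simp [Finset.mem_symmDiff, succ_mem_lift, (Fin.succ_ne_zero i)]

lemma lift_ne_lift {b : Bool} {X Y : Finset (Fin m)} : lift (!b) X ≠ lift b Y := by
  intro h
  have := zero_mem_lift (b := !b) (X := X)
  rw [h, zero_mem_lift] at this
  cases b <;> simp at this

lemma bridge_adj {X : Finset (Fin m)} : (cube (m+1)).Adj (lift false X) (lift true X) := by
  rw [cube_adj, ← symmDiff_zero_false, symmDiff_symmDiff_cancel_left]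
  simp

lemma edgeInDir_zero_bridgeAt {X : Finset (Fin m)} :
    edgeInDir 0 (bridgeAt X) := ⟨lift false X, by rw [symmDiff_zero_false]; rfl⟩

lemma bridgeAt_injective : Function.Injective (bridgeAt (m := m)) := by
  intro X Y h
  rw [bridgeAt, bridgeAt, Sym2.eq_iff] at h
  rcases h with ⟨h1, -⟩ | ⟨h1, -⟩
  · exact lift_injective false h1
  · exact absurd h1.symm (lift_ne_lift (b := false))

/-- Classification of cube edges: vertical (a bridge) or within a layer. -/
lemma adj_layer_cases {Y Z : Finset (Fin (m+1))} (h : (cube (m+1)).Adj Y Z) :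
    (∃ X, s(Y, Z) = bridgeAt X) ∨ (((0 : Fin (m+1)) ∈ Y) ↔ ((0 : Fin (m+1)) ∈ Z)) := by
  rw [cube_adj, Finset.card_eq_one] at h
  obtain ⟨d, hd⟩ := h
  rcases Fin.eq_zero_or_eq_succ d with rfl | ⟨j, rfl⟩
  · left
    have hZ : Z = symmDiff Y {(0 : Fin (m+1))} := by
      rw [← hd, symmDiff_symmDiff_cancel_left]
    by_cases h0 : (0 : Fin (m+1)) ∈ Y
    · refine ⟨down Z, ?_⟩
      have h0Z : (0 : Fin (m+1)) ∉ Z := by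
        rw [hZ]; simp [Finset.mem_symmDiff, h0]
      have hZ' : lift false (down Z) = Z := lift_down (by simp [h0Z])
      have hY' : lift true (down Z) = Y := by
        rw [lift_true_eq, hZ', hZ]
        ext x
        rcases Fin.eq_zero_or_eq_succ x with rfl | ⟨i, rfl⟩
        · simp [h0]
        · simp [Finset.mem_symmDiff, (Fin.succ_ne_zero i), Fin.succ_ne_zero]
      rw [bridgeAt, hY', hZ']
      exact Sym2.eq_swap
    · refine ⟨down Y, ?_⟩
      have hY' : lift false (down Y) = Y := lift_down (by simp [h0])
      have hZ' : lift true (down Y) = Z := by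
        rw [lift_true_eq, hY', hZ]
        ext x
        rcases Fin.eq_zero_or_eq_succ x with rfl | ⟨i, rfl⟩
        · simp [Finset.mem_symmDiff, h0]
        · simp [Finset.mem_symmDiff, (Fin.succ_ne_zero i), Fin.succ_ne_zero]
      rw [bridgeAt, hY', hZ']
  · right
    have : (0 : Fin (m+1)) ∉ symmDiff Y Z := by
      rw [hd]; simp [(Fin.succ_ne_zero j).symm]
    simp only [Finset.mem_symmDiff, not_or, not_and, not_not] at this
    exact ⟨this.1, this.2⟩


variable {m : ℕ}

/-- Lift the edge set of a graph on `Finset (Fin m)` into layer `b`. -/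
def les (b : Bool) (S : SimpleGraph (Finset (Fin m))) : Set (Sym2 (Finset (Fin (m + 1)))) :=
  (Sym2.map (lift b)) '' S.edgeSet

/-- The edge set of the union tree. -/
def uset (X : Finset (Fin m)) (S0 S1 : SimpleGraph (Finset (Fin m))) :
    Set (Sym2 (Finset (Fin (m + 1)))) :=
  les false S0 ∪ les true S1 ∪ {bridgeAt X}

/-- The union tree determined by a bridge position and two layer trees. -/
def UT (X : Finset (Fin m)) (S0 S1 : SimpleGraph (Finset (Fin m))) :
    SimpleGraph (Finset (Fin (m + 1))) :=
  SimpleGraph.fromEdgeSet (uset X S0 S1)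

/-- Pull a graph on the `(m+1)`-cube back to layer `b`. -/
def pull (b : Bool) (G : SimpleGraph (Finset (Fin (m + 1)))) :
    SimpleGraph (Finset (Fin m)) where
  Adj u v := G.Adj (lift b u) (lift b v)
  symm := ⟨fun _ _ (h : G.Adj _ _) => h.symm⟩
  loopless := ⟨fun _ (h : G.Adj _ _) => G.loopless.irrefl _ h⟩

lemma mk_mem_les_iff {b : Bool} {S : SimpleGraph (Finset (Fin m))}
    {Y Z : Finset (Fin (m + 1))} :
    s(Y, Z) ∈ les b S ↔ ∃ u v, S.Adj u v ∧ Y = lift b u ∧ Z = lift b v := by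
  constructor
  · rintro ⟨e, he, hmap⟩
    induction e with
    | _ u v =>
      rw [Sym2.map_pair_eq, Sym2.eq_iff] at hmap
      rcases hmap with ⟨h1, h2⟩ | ⟨h1, h2⟩
      · exact ⟨u, v, he, h1.symm, h2.symm⟩
      · exact ⟨v, u, (S.mem_edgeSet.mp he).symm, h2.symm, h1.symm⟩
  · rintro ⟨u, v, huv, rfl, rfl⟩
    exact ⟨s(u, v), huv, rfl⟩

lemma mem_les_layer {b : Bool} {S : SimpleGraph (Finset (Fin m))}
    {Y Z : Finset (Fin (m + 1))} (h : s(Y, Z) ∈ les b S) :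
    (((0 : Fin (m+1)) ∈ Y) ↔ b = true) ∧ (((0 : Fin (m+1)) ∈ Z) ↔ b = true) := by
  rw [mk_mem_les_iff] at h
  obtain ⟨u, v, -, rfl, rfl⟩ := h
  exact ⟨zero_mem_lift, zero_mem_lift⟩

lemma les_not_diag {b : Bool} {S : SimpleGraph (Finset (Fin m))}
    {e : Sym2 (Finset (Fin (m + 1)))} (h : e ∈ les b S) : ¬ e.IsDiag := by
  induction e with
  | _ Y Z =>
    rw [mk_mem_les_iff] at h
    obtain ⟨u, v, huv, rfl, rfl⟩ := h
    rw [Sym2.mk_isDiag_iff]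
    exact fun hc => huv.ne (lift_injective b hc)

lemma bridge_not_diag {X : Finset (Fin m)} : ¬ (bridgeAt X).IsDiag := by
  rw [bridgeAt, Sym2.mk_isDiag_iff]
  exact lift_ne_lift (b := true)

lemma uset_not_diag {X : Finset (Fin m)} {S0 S1 : SimpleGraph (Finset (Fin m))}
    {e : Sym2 (Finset (Fin (m + 1)))} (h : e ∈ uset X S0 S1) : ¬ e.IsDiag := by
  rcases h with (h | h) | h
  · exact les_not_diag h
  · exact les_not_diag h
  · rw [Set.mem_singleton_iff] at h; subst h; exact bridge_not_diag

lemma edgeSet_UT {X : Finset (Fin m)} {S0 S1 : SimpleGraph (Finset (Fin m))} :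
    (UT X S0 S1).edgeSet = uset X S0 S1 := by
  rw [UT, SimpleGraph.edgeSet_fromEdgeSet]
  ext e
  simp only [Set.mem_diff, Set.mem_setOf_eq, and_iff_left_iff_imp]
  exact fun he => uset_not_diag he

lemma UT_le_cube {X : Finset (Fin m)} {S0 S1 : SimpleGraph (Finset (Fin m))}
    (h0 : S0 ≤ cube m) (h1 : S1 ≤ cube m) : UT X S0 S1 ≤ cube (m + 1) := by
  intro Y Z h
  rw [UT, SimpleGraph.fromEdgeSet_adj] at h
  obtain ⟨hmem, hne⟩ := h
  rcases hmem with (hm | hm) | hm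
  · rw [mk_mem_les_iff] at hm
    obtain ⟨u, v, huv, rfl, rfl⟩ := hm
    exact adj_lift_iff.mpr (h0 huv)
  · rw [mk_mem_les_iff] at hm
    obtain ⟨u, v, huv, rfl, rfl⟩ := hm
    exact adj_lift_iff.mpr (h1 huv)
  · rw [Set.mem_singleton_iff, bridgeAt, Sym2.eq_iff] at hm
    rcases hm with ⟨rfl, rfl⟩ | ⟨rfl, rfl⟩
    · exact bridge_adj
    · exact bridge_adj.symm

/-- Select the layer-`b` tree. -/
def sel (b : Bool) (S0 S1 : SimpleGraph (Finset (Fin m))) : SimpleGraph (Finset (Fin m)) :=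
  bif b then S1 else S0

lemma mk_mem_uset_layer_iff {X : Finset (Fin m)} {S0 S1 : SimpleGraph (Finset (Fin m))}
    {b : Bool} {u v : Finset (Fin m)} :
    s(lift b u, lift b v) ∈ uset X S0 S1 ↔ (sel b S0 S1).Adj u v := by
  constructor
  · rintro ((h | h) | h)
    · obtain ⟨u', v', huv, h1, h2⟩ := mk_mem_les_iff.mp h
      cases b
      · rw [sel]
        rwa [lift_injective _ h1, lift_injective _ h2]
      · exact absurd h1.symm (lift_ne_lift (b := true))
    · obtain ⟨u', v', huv, h1, h2⟩ := mk_mem_les_iff.mp h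
      cases b
      · exact absurd h1.symm (lift_ne_lift (b := false))
      · rw [sel]
        rwa [lift_injective _ h1, lift_injective _ h2]
    · exfalso
      rw [Set.mem_singleton_iff, bridgeAt, Sym2.eq_iff] at h
      cases b
      · rcases h with ⟨-, h2⟩ | ⟨h1, -⟩
        · exact lift_ne_lift (b := false) h2.symm
        · exact lift_ne_lift (b := false) h1.symm
      · rcases h with ⟨h1, -⟩ | ⟨-, h2⟩
        · exact lift_ne_lift (b := true) h1.symm
        · exact lift_ne_lift (b := true) h2.symm
  · intro h
    cases b
    · exact Or.inl (Or.inl (mk_mem_les_iff.mpr ⟨u, v, h, rfl, rfl⟩))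
    · exact Or.inl (Or.inr (mk_mem_les_iff.mpr ⟨u, v, h, rfl, rfl⟩))

lemma pull_UT {X : Finset (Fin m)} {S0 S1 : SimpleGraph (Finset (Fin m))} {b : Bool} :
    pull b (UT X S0 S1) = sel b S0 S1 := by
  ext u v
  show (UT X S0 S1).Adj (lift b u) (lift b v) ↔ _
  rw [UT, SimpleGraph.fromEdgeSet_adj, mk_mem_uset_layer_iff]
  constructor
  · exact fun h => h.1
  · exact fun h => ⟨h, fun hc => h.ne (lift_injective b hc)⟩

lemma bridge_mem_edgeSet_UT {X : Finset (Fin m)} {S0 S1 : SimpleGraph (Finset (Fin m))} :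
    bridgeAt X ∈ (UT X S0 S1).edgeSet := by
  rw [edgeSet_UT]
  exact Or.inr rfl

/-- The unique vertical edge of `UT` is the bridge. -/
lemma vertical_eq_bridge {X : Finset (Fin m)} {S0 S1 : SimpleGraph (Finset (Fin m))}
    {e : Sym2 (Finset (Fin (m+1)))} (he : e ∈ (UT X S0 S1).edgeSet)
    (hd : edgeInDir 0 e) : e = bridgeAt X := by
  rw [edgeSet_UT] at he
  obtain ⟨Y, rfl⟩ := hd
  have hYmem : ((0:Fin (m+1)) ∈ Y) ↔ ¬ ((0:Fin (m+1)) ∈ symmDiff Y {(0 : Fin (m+1))}) := by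
    simp [Finset.mem_symmDiff]
  rcases he with (h | h) | h
  · obtain ⟨h1, h2⟩ := mem_les_layer h
    rw [h1, h2] at hYmem
    simp at hYmem
  · obtain ⟨h1, h2⟩ := mem_les_layer h
    rw [h1, h2] at hYmem
    simp at hYmem
  · exact h

lemma dirCount_zero_UT {X : Finset (Fin m)} {S0 S1 : SimpleGraph (Finset (Fin m))} :
    dirCount (UT X S0 S1) 0 = 1 := by
  rw [dirCount, Set.ncard_eq_one]
  refine ⟨bridgeAt X, ?_⟩
  ext e
  simp only [Set.mem_setOf_eq, Set.mem_singleton_iff]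
  constructor
  · rintro ⟨he, hd⟩
    exact vertical_eq_bridge he hd
  · rintro rfl
    exact ⟨bridge_mem_edgeSet_UT, edgeInDir_zero_bridgeAt⟩


variable {m : ℕ}

/-- The lift homomorphism from a pulled-back graph. -/
def liftHom (b : Bool) (G : SimpleGraph (Finset (Fin (m + 1)))) : pull b G →g G :=
  ⟨lift b, fun h => h⟩

lemma liftHom_coe {b : Bool} {G : SimpleGraph (Finset (Fin (m + 1)))} :
    ⇑(liftHom b G) = lift b := rfl

section Walks

variable {G : SimpleGraph (Finset (Fin (m + 1)))} {Xs : Finset (Fin m)}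

lemma bridge_cross {X : Finset (Fin m)} {Y Z : Finset (Fin (m + 1))}
    (h : s(Y, Z) = bridgeAt X) : ¬ (((0 : Fin (m+1)) ∈ Y) ↔ ((0 : Fin (m+1)) ∈ Z)) := by
  rw [bridgeAt, Sym2.eq_iff] at h
  rcases h with ⟨rfl, rfl⟩ | ⟨rfl, rfl⟩ <;>
    simp [zero_mem_lift]

lemma step_layer (hle : G ≤ cube (m + 1))
    (hv : ∀ e ∈ G.edgeSet, edgeInDir 0 e → e = bridgeAt Xs)
    {Y Z : Finset (Fin (m + 1))} (h : G.Adj Y Z) (hne : s(Y, Z) ≠ bridgeAt Xs) :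
    ((0 : Fin (m+1)) ∈ Y) ↔ ((0 : Fin (m+1)) ∈ Z) := by
  rcases adj_layer_cases (hle h) with ⟨X, hX⟩ | hsame
  · exfalso
    refine hne ?_
    refine hv _ (G.mem_edgeSet.mpr h) ?_
    rw [hX]
    exact edgeInDir_zero_bridgeAt
  · exact hsame

lemma walk_count_even (hle : G ≤ cube (m + 1))
    (hv : ∀ e ∈ G.edgeSet, edgeInDir 0 e → e = bridgeAt Xs) :
    ∀ {Y Z : Finset (Fin (m + 1))} (w : G.Walk Y Z),
      (Even (w.edges.count (bridgeAt Xs)) ↔ (((0 : Fin (m+1)) ∈ Y) ↔ ((0 : Fin (m+1)) ∈ Z))) := by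
  intro Y Z w
  induction w with
  | nil => simp
  | cons h p ih =>
    rename_i Y Y₁ Z
    rw [SimpleGraph.Walk.edges_cons, List.count_cons]
    by_cases hb : s(Y, Y₁) = bridgeAt Xs
    · have hcross := bridge_cross hb
      rw [if_pos (by simp [hb]), Nat.even_add_one]
      tauto
    · have hsame := step_layer hle hv h hb
      rw [if_neg (by simp [hb]), Nat.add_zero]
      tauto

lemma walk_support_layer (hle : G ≤ cube (m + 1))
    (hv : ∀ e ∈ G.edgeSet, edgeInDir 0 e → e = bridgeAt Xs) :
    ∀ {Y Z : Finset (Fin (m + 1))} (w : G.Walk Y Z), bridgeAt Xs ∉ w.edges →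
      ∀ v ∈ w.support, (((0 : Fin (m+1)) ∈ v) ↔ ((0 : Fin (m+1)) ∈ Y)) := by
  intro Y Z w
  induction w with
  | nil =>
    intro _ v hval
    rw [SimpleGraph.Walk.support_nil, List.mem_singleton] at hval
    subst hval; rfl
  | cons h p ih =>
    rename_i Y Y₁ Z
    intro hnb v hval
    rw [SimpleGraph.Walk.edges_cons, List.mem_cons] at hnb
    push_neg at hnb
    have hstep := step_layer hle hv h (Ne.symm hnb.1)
    rw [SimpleGraph.Walk.support_cons, List.mem_cons] at hval
    rcases hval with rfl | hval
    · rfl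
    · have := ih hnb.2 v hval
      tauto

lemma walk_pull {b : Bool} :
    ∀ {Y Z : Finset (Fin (m + 1))} (w : G.Walk Y Z),
      (∀ x ∈ w.support, (((0 : Fin (m+1)) ∈ x) ↔ b = true)) →
      ∀ u v : Finset (Fin m), (hu : Y = lift b u) → (hv : Z = lift b v) →
      ∃ w' : (pull b G).Walk u v, w'.map (liftHom b G) = w.copy hu hv := by
  intro Y Z w
  induction w with
  | nil =>
    intro _ u v hu hv
    obtain rfl : u = v := lift_injective b (hu ▸ hv)
    subst hu
    exact ⟨SimpleGraph.Walk.nil, by simp; rfl⟩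
  | cons h p ih =>
    rename_i Y Y₁ Z
    intro hsupp u v hu hv
    subst hu
    subst hv
    have hY₁ : ((0 : Fin (m+1)) ∈ Y₁) ↔ b = true := by
      refine hsupp Y₁ ?_
      rw [SimpleGraph.Walk.support_cons, List.mem_cons]
      exact Or.inr p.start_mem_support
    obtain ⟨z, rfl⟩ : ∃ z, Y₁ = lift b z := ⟨down Y₁, (lift_down hY₁).symm⟩
    have hadj : (pull b G).Adj u z := h
    have hsupp' : ∀ x ∈ p.support, (((0 : Fin (m+1)) ∈ x) ↔ b = true) := by
      intro x hx
      refine hsupp x ?_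
      rw [SimpleGraph.Walk.support_cons, List.mem_cons]
      exact Or.inr hx
    obtain ⟨p', hp'⟩ := ih hsupp' z v rfl rfl
    simp only [SimpleGraph.Walk.copy_rfl_rfl] at hp' ⊢
    exact ⟨SimpleGraph.Walk.cons hadj p', by rw [SimpleGraph.Walk.map_cons, hp']; rfl⟩

lemma count_zero_of_even_le_one {n : ℕ} (h1 : Even n) (h2 : n ≤ 1) : n = 0 := by
  obtain ⟨k, rfl⟩ := h1; omega

lemma acyclic_of_pulls (hle : G ≤ cube (m + 1))
    (hv : ∀ e ∈ G.edgeSet, edgeInDir 0 e → e = bridgeAt Xs)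
    (h0 : (pull false G).IsAcyclic) (h1 : (pull true G).IsAcyclic) : G.IsAcyclic := by
  intro Y c hc
  have hcount : Even (c.edges.count (bridgeAt Xs)) :=
    (walk_count_even hle hv c).mpr Iff.rfl
  have hle1 : c.edges.count (bridgeAt Xs) ≤ 1 :=
    hc.isCircuit.isTrail.count_edges_le_one _
  have hnotmem : bridgeAt Xs ∉ c.edges :=
    List.count_eq_zero.mp (count_zero_of_even_le_one hcount hle1)
  obtain ⟨b, hY⟩ : ∃ b : Bool, (((0 : Fin (m+1)) ∈ Y) ↔ b = true) :=
    ⟨decide ((0 : Fin (m+1)) ∈ Y), by simp⟩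
  have hsupp : ∀ x ∈ c.support, (((0 : Fin (m+1)) ∈ x) ↔ b = true) := by
    intro x hx
    rw [walk_support_layer hle hv c hnotmem x hx]
    exact hY
  obtain ⟨u, hu⟩ : ∃ u, Y = lift b u := ⟨down Y, (lift_down hY).symm⟩
  obtain ⟨c', hc'⟩ := walk_pull c hsupp u u hu hu
  have hinj : Function.Injective ⇑(liftHom b G) := lift_injective b
  have hcyc : c'.IsCycle := by
    rw [← SimpleGraph.Walk.map_isCycle_iff_of_injective hinj, hc']
    subst hu
    simp only [SimpleGraph.Walk.copy_rfl_rfl]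
    exact hc
  cases b
  · exact h0 c' hcyc
  · exact h1 c' hcyc

lemma pull_acyclic {b : Bool} (hG : G.IsAcyclic) : (pull b G).IsAcyclic := by
  intro u c hc
  exact hG (c.map (liftHom b G))
    ((SimpleGraph.Walk.map_isCycle_iff_of_injective (lift_injective b)).mpr hc)

lemma pull_le_cube {b : Bool} (hle : G ≤ cube (m + 1)) : pull b G ≤ cube m := by
  intro u v h
  exact adj_lift_iff.mp (hle h)

lemma pull_connected {b : Bool} (hle : G ≤ cube (m + 1))
    (hv : ∀ e ∈ G.edgeSet, edgeInDir 0 e → e = bridgeAt Xs)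
    (hconn : G.Connected) : (pull b G).Connected := by
  refine SimpleGraph.Connected.mk ?_
  intro u v
  obtain ⟨w⟩ := hconn.preconnected (lift b u) (lift b v)
  set p := w.toPath with hp
  have hcount : Even (p.1.edges.count (bridgeAt Xs)) := by
    rw [walk_count_even hle hv]
    rw [zero_mem_lift, zero_mem_lift]
  have hle1 : p.1.edges.count (bridgeAt Xs) ≤ 1 :=
    p.2.isTrail.count_edges_le_one _
  have hnotmem : bridgeAt Xs ∉ p.1.edges :=
    List.count_eq_zero.mp (count_zero_of_even_le_one hcount hle1)
  have hsupp : ∀ x ∈ p.1.support, (((0 : Fin (m+1)) ∈ x) ↔ b = true) := by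
    intro x hx
    rw [walk_support_layer hle hv _ hnotmem x hx]
    exact zero_mem_lift
  obtain ⟨w', -⟩ := walk_pull p.1 hsupp u v rfl rfl
  exact ⟨w'⟩

end Walks


variable {m : ℕ}

/-- Inclusion of a layer tree into the union tree. -/
def selHom (b : Bool) (X : Finset (Fin m)) (S0 S1 : SimpleGraph (Finset (Fin m))) :
    sel b S0 S1 →g UT X S0 S1 where
  toFun := lift b
  map_rel' := fun {u v} h => by
    rw [UT, SimpleGraph.fromEdgeSet_adj]
    exact ⟨mk_mem_uset_layer_iff.mpr h, fun hc => h.ne (lift_injective b hc)⟩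

lemma UT_adj_bridge {X : Finset (Fin m)} {S0 S1 : SimpleGraph (Finset (Fin m))} :
    (UT X S0 S1).Adj (lift false X) (lift true X) := by
  rw [UT, SimpleGraph.fromEdgeSet_adj]
  exact ⟨Or.inr rfl, lift_ne_lift (b := true)⟩

lemma UT_connected {X : Finset (Fin m)} {S0 S1 : SimpleGraph (Finset (Fin m))}
    (h0 : S0.Connected) (h1 : S1.Connected) : (UT X S0 S1).Connected := by
  have hsel : ∀ b : Bool, (sel b S0 S1).Connected := by
    intro b; cases b
    · exact h0
    · exact h1
  have hreach : ∀ Y, (UT X S0 S1).Reachable Y (lift false X) := by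
    intro Y
    obtain ⟨b, hY⟩ : ∃ b : Bool, (((0 : Fin (m+1)) ∈ Y) ↔ b = true) :=
      ⟨decide ((0 : Fin (m+1)) ∈ Y), by simp⟩
    obtain ⟨u, rfl⟩ : ∃ u, Y = lift b u := ⟨down Y, (lift_down hY).symm⟩
    have hlayer : (UT X S0 S1).Reachable (lift b u) (lift b X) :=
      ((hsel b).preconnected u X).map (selHom b X S0 S1)
    cases b
    · exact hlayer
    · exact hlayer.trans (UT_adj_bridge.symm.reachable)
  exact SimpleGraph.Connected.mk (fun Y Z => (hreach Y).trans (hreach Z).symm)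

lemma UT_isSpanningTree {X : Finset (Fin m)} {S0 S1 : SimpleGraph (Finset (Fin m))}
    (h0 : IsSpanningTreeOf S0 (cube m)) (h1 : IsSpanningTreeOf S1 (cube m)) :
    IsSpanningTreeOf (UT X S0 S1) (cube (m + 1)) := by
  refine ⟨UT_le_cube h0.1 h1.1, UT_connected h0.2.isConnected h1.2.isConnected, ?_⟩
  refine acyclic_of_pulls (Xs := X) (UT_le_cube h0.1 h1.1)
    (fun e he hd => vertical_eq_bridge he hd) ?_ ?_
  · rw [pull_UT]
    exact h0.2.IsAcyclic
  · rw [pull_UT]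
    exact h1.2.IsAcyclic

lemma exists_bridge {T : SimpleGraph (Finset (Fin (m+1)))} (hsub : T ≤ cube (m + 1))
    (hcnt : dirCount T 0 = 1) :
    ∃ Xs, bridgeAt Xs ∈ T.edgeSet ∧ ∀ e ∈ T.edgeSet, edgeInDir 0 e → e = bridgeAt Xs := by
  rw [dirCount, Set.ncard_eq_one] at hcnt
  obtain ⟨e₀, he₀⟩ := hcnt
  have h : e₀ ∈ {e | e ∈ T.edgeSet ∧ edgeInDir 0 e} := by rw [he₀]; exact rfl
  obtain ⟨hmem, Y, hY⟩ := h
  have hadj : (cube (m+1)).Adj Y (symmDiff Y {0}) := hsub (T.mem_edgeSet.mp (hY ▸ hmem))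
  rcases adj_layer_cases hadj with ⟨Xs, hXs⟩ | hsame
  · refine ⟨Xs, ?_, ?_⟩
    · rw [← hXs, ← hY]; exact hmem
    · intro e he hd
      have h2 : e ∈ {e | e ∈ T.edgeSet ∧ edgeInDir 0 e} := ⟨he, hd⟩
      rw [he₀, Set.mem_singleton_iff] at h2
      rw [h2, hY, hXs]
  · exfalso
    simp [Finset.mem_symmDiff] at hsame

lemma reconstruct {T : SimpleGraph (Finset (Fin (m+1)))} (hsub : T ≤ cube (m + 1))
    {Xs : Finset (Fin m)} (hbr : bridgeAt Xs ∈ T.edgeSet)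
    (hv : ∀ e ∈ T.edgeSet, edgeInDir 0 e → e = bridgeAt Xs) :
    T = UT Xs (pull false T) (pull true T) := by
  have hset : T.edgeSet = uset Xs (pull false T) (pull true T) := by
    ext e
    induction e with
    | _ Y Z =>
      constructor
      · intro he
        have hadj := T.mem_edgeSet.mp he
        rcases adj_layer_cases (hsub hadj) with ⟨W, hW⟩ | hsame
        · have : s(Y, Z) = bridgeAt Xs := by
            refine hv _ he ?_
            rw [hW]
            exact edgeInDir_zero_bridgeAt
          exact Or.inr this
        · obtain ⟨b, hY⟩ : ∃ b : Bool, (((0 : Fin (m+1)) ∈ Y) ↔ b = true) :=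
            ⟨decide ((0 : Fin (m+1)) ∈ Y), by simp⟩
          have hZ : ((0 : Fin (m+1)) ∈ Z) ↔ b = true := hsame.symm.trans hY
          obtain ⟨u, rfl⟩ : ∃ u, Y = lift b u := ⟨down Y, (lift_down hY).symm⟩
          obtain ⟨v, rfl⟩ : ∃ v, Z = lift b v := ⟨down Z, (lift_down hZ).symm⟩
          refine mk_mem_uset_layer_iff.mpr ?_
          cases b
          · exact hadj
          · exact hadj
      · intro he
        rcases he with (h | h) | h
        · obtain ⟨u, v, huv, rfl, rfl⟩ := mk_mem_les_iff.mp h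
          exact T.mem_edgeSet.mpr huv
        · obtain ⟨u, v, huv, rfl, rfl⟩ := mk_mem_les_iff.mp h
          exact T.mem_edgeSet.mpr huv
        · rw [Set.mem_singleton_iff] at h
          rw [h]
          exact hbr
  conv_lhs => rw [← SimpleGraph.fromEdgeSet_edgeSet T]
  rw [hset]
  rfl

lemma pull_isSpanningTree {T : SimpleGraph (Finset (Fin (m+1)))} {b : Bool}
    (hT : IsSpanningTreeOf T (cube (m + 1))) {Xs : Finset (Fin m)}
    (hv : ∀ e ∈ T.edgeSet, edgeInDir 0 e → e = bridgeAt Xs) :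
    IsSpanningTreeOf (pull b T) (cube m) :=
  ⟨pull_le_cube hT.1,
    pull_connected hT.1 hv hT.2.isConnected, pull_acyclic hT.2.IsAcyclic⟩

lemma UT_inj {X X' : Finset (Fin m)} {S0 S1 S0' S1' : SimpleGraph (Finset (Fin m))}
    (h : UT X S0 S1 = UT X' S0' S1') : X = X' ∧ S0 = S0' ∧ S1 = S1' := by
  refine ⟨?_, ?_, ?_⟩
  · have hb : bridgeAt X ∈ (UT X' S0' S1').edgeSet := by
      rw [← h]; exact bridge_mem_edgeSet_UT
    exact bridgeAt_injective (vertical_eq_bridge hb edgeInDir_zero_bridgeAt)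
  · have := pull_UT (X := X) (S0 := S0) (S1 := S1) (b := false)
    rw [h, pull_UT] at this
    exact this.symm
  · have := pull_UT (X := X) (S0 := S0) (S1 := S1) (b := true)
    rw [h, pull_UT] at this
    exact this.symm


variable {m : ℕ}

lemma symmDiff_lift_zero {b : Bool} {u : Finset (Fin m)} :
    symmDiff (lift b u) {(0 : Fin (m+1))} = lift (!b) u := by
  cases b
  · exact symmDiff_zero_false
  · exact symmDiff_zero_true

lemma slideEdge_succ_lift {b : Bool} {j : Fin m} {e : Sym2 (Finset (Fin m))} :
    slideEdge j.succ (Sym2.map (lift b) e) = Sym2.map (lift b) (slideEdge j e) := by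
  rw [slideEdge, slideEdge, Sym2.map_map, Sym2.map_map]
  congr 1
  funext u
  exact lift_symmDiff.symm

lemma slideEdge_zero_lift {b : Bool} {e : Sym2 (Finset (Fin m))} :
    slideEdge 0 (Sym2.map (lift b) e) = Sym2.map (lift (!b)) e := by
  rw [slideEdge, Sym2.map_map]
  congr 1
  funext u
  exact symmDiff_lift_zero

lemma slideEdge_succ_bridge {X : Finset (Fin m)} {j : Fin m} :
    slideEdge j.succ (bridgeAt X) = bridgeAt (symmDiff X {j}) := by
  simp only [bridgeAt, slideEdge, Sym2.map_pair_eq, lift_symmDiff]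

lemma slideEdge_zero_bridge {X : Finset (Fin m)} :
    slideEdge 0 (bridgeAt X) = bridgeAt X := by
  simp only [bridgeAt, slideEdge, Sym2.map_pair_eq, symmDiff_zero_false, symmDiff_zero_true]
  exact Sym2.eq_swap

lemma bridge_not_mem_les {X : Finset (Fin m)} {b : Bool} {S : SimpleGraph (Finset (Fin m))} :
    bridgeAt X ∉ les b S := by
  intro h
  have h2 := (mem_les_layer (Y := lift false X) (Z := lift true X) h)
  rw [zero_mem_lift, zero_mem_lift] at h2
  cases b
  · exact absurd h2.2.mp (by simp)
  · exact absurd h2.1.mpr (by simp)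

lemma liftE_ne_bridge {b : Bool} {X u v : _} :
    s(lift b u, lift b v) ≠ bridgeAt (X : Finset (Fin m)) := by
  intro h
  have := bridge_cross h
  rw [zero_mem_lift, zero_mem_lift] at this
  exact this Iff.rfl

lemma liftE_not_mem_les {b b' : Bool} (hbb : b ≠ b') {u v : Finset (Fin m)}
    {S : SimpleGraph (Finset (Fin m))} : s(lift b u, lift b v) ∉ les b' S := by
  intro h
  have h2 := mem_les_layer h
  rw [zero_mem_lift, zero_mem_lift] at h2
  cases b <;> cases b' <;> simp_all

lemma set_shuffle {α : Type*} (A B C : Set α) (x y : α) (hB : x ∉ B) (hC : x ∉ C) :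
    ((A ∪ B ∪ C) \ {x}) ∪ {y} = ((A \ {x}) ∪ {y}) ∪ B ∪ C := by
  ext z
  simp only [Set.mem_union, Set.mem_diff, Set.mem_singleton_iff]
  constructor
  · rintro (⟨(h | h) | h, hne⟩ | rfl)
    · exact Or.inl (Or.inl (Or.inl ⟨h, hne⟩))
    · exact Or.inl (Or.inr h)
    · exact Or.inr h
    · exact Or.inl (Or.inl (Or.inr rfl))
  · rintro (((⟨h, hne⟩ | rfl) | h) | h)
    · exact Or.inl ⟨Or.inl (Or.inl h), hne⟩
    · exact Or.inr rfl
    · exact Or.inl ⟨Or.inl (Or.inr h), fun hc => hB (hc ▸ h)⟩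
    · exact Or.inl ⟨Or.inr h, fun hc => hC (hc ▸ h)⟩

lemma set_shuffle₂ {α : Type*} (A B C : Set α) (x y : α) (hA : x ∉ A) (hC : x ∉ C) :
    ((A ∪ B ∪ C) \ {x}) ∪ {y} = A ∪ ((B \ {x}) ∪ {y}) ∪ C := by
  ext z
  simp only [Set.mem_union, Set.mem_diff, Set.mem_singleton_iff]
  constructor
  · rintro (⟨(h | h) | h, hne⟩ | rfl)
    · exact Or.inl (Or.inl h)
    · exact Or.inl (Or.inr (Or.inl ⟨h, hne⟩))
    · exact Or.inr h
    · exact Or.inl (Or.inr (Or.inr rfl))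
  · rintro ((h | (⟨h, hne⟩ | rfl)) | h)
    · exact Or.inl ⟨Or.inl (Or.inl h), fun hc => hA (hc ▸ h)⟩
    · exact Or.inl ⟨Or.inl (Or.inr h), hne⟩
    · exact Or.inr rfl
    · exact Or.inl ⟨Or.inr h, fun hc => hC (hc ▸ h)⟩

lemma les_fromEdgeSet_edit {b : Bool} {S : SimpleGraph (Finset (Fin m))}
    {e₀ f₀ : Sym2 (Finset (Fin m))} (hf₀ : ¬ f₀.IsDiag) :
    les b (SimpleGraph.fromEdgeSet (S.edgeSet \ {e₀} ∪ {f₀})) =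
      (les b S \ {Sym2.map (lift b) e₀}) ∪ {Sym2.map (lift b) f₀} := by
  have hes : (SimpleGraph.fromEdgeSet (S.edgeSet \ {e₀} ∪ {f₀})).edgeSet =
      S.edgeSet \ {e₀} ∪ {f₀} := by
    rw [SimpleGraph.edgeSet_fromEdgeSet]
    ext e
    simp only [Set.mem_diff, Set.mem_union, Set.mem_singleton_iff, Set.mem_setOf_eq,
      and_iff_left_iff_imp]
    rintro (⟨he, -⟩ | rfl)
    · exact S.not_isDiag_of_mem_edgeSet he
    · exact hf₀
  rw [les, hes, Set.image_union, Set.image_diff (Sym2.map.injective (lift_injective b)),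
    Set.image_singleton, Set.image_singleton]
  rfl

/-- Sliding the bridge in a horizontal direction. -/
lemma uset_slide_bridge {X : Finset (Fin m)} {S0 S1 : SimpleGraph (Finset (Fin m))}
    {j : Fin m} :
    (uset X S0 S1 \ {bridgeAt X}) ∪ {slideEdge j.succ (bridgeAt X)} =
      uset (symmDiff X {j}) S0 S1 := by
  rw [slideEdge_succ_bridge]
  ext e
  simp only [uset, Set.mem_union, Set.mem_diff, Set.mem_singleton_iff]
  constructor
  · rintro (⟨(h | h) | h, hne⟩ | rfl)
    · exact Or.inl (Or.inl h)
    · exact Or.inl (Or.inr h)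
    · exact absurd h hne
    · exact Or.inr rfl
  · rintro ((h | h) | h)
    · exact Or.inl ⟨Or.inl (Or.inl h), fun hc => bridge_not_mem_les (hc ▸ h)⟩
    · exact Or.inl ⟨Or.inl (Or.inr h), fun hc => bridge_not_mem_les (hc ▸ h)⟩
    · exact Or.inr h

/-- Sliding a layer-`false` edge horizontally. -/
lemma uset_slide_layer_false {X : Finset (Fin m)} {S0 S1 : SimpleGraph (Finset (Fin m))}
    {e₀ f₀ : Sym2 (Finset (Fin m))} (hf₀ : ¬ f₀.IsDiag) :
    (uset X S0 S1 \ {Sym2.map (lift false) e₀}) ∪ {Sym2.map (lift false) f₀} =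
      uset X (SimpleGraph.fromEdgeSet (S0.edgeSet \ {e₀} ∪ {f₀})) S1 := by
  induction e₀ with
  | _ u v =>
    rw [uset, Sym2.map_pair_eq,
      set_shuffle (les false S0) (les true S1) {bridgeAt X}
        s(lift false u, lift false v) (Sym2.map (lift false) f₀)
        (liftE_not_mem_les (by simp))
        (by rw [Set.mem_singleton_iff]; exact liftE_ne_bridge),
      ← Sym2.map_pair_eq, ← les_fromEdgeSet_edit hf₀]
    rfl

lemma uset_slide_layer_true {X : Finset (Fin m)} {S0 S1 : SimpleGraph (Finset (Fin m))}
    {e₀ f₀ : Sym2 (Finset (Fin m))} (hf₀ : ¬ f₀.IsDiag) :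
    (uset X S0 S1 \ {Sym2.map (lift true) e₀}) ∪ {Sym2.map (lift true) f₀} =
      uset X S0 (SimpleGraph.fromEdgeSet (S1.edgeSet \ {e₀} ∪ {f₀})) := by
  induction e₀ with
  | _ u v =>
    rw [uset, Sym2.map_pair_eq,
      set_shuffle₂ (les false S0) (les true S1) {bridgeAt X}
        s(lift true u, lift true v) (Sym2.map (lift true) f₀)
        (liftE_not_mem_les (by simp))
        (by rw [Set.mem_singleton_iff]; exact liftE_ne_bridge),
      ← Sym2.map_pair_eq, ← les_fromEdgeSet_edit hf₀]
    rfl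

lemma slideEdge_not_diag {j : Fin m} {u v : Finset (Fin m)} (h : u ≠ v) :
    ¬ (slideEdge j s(u, v)).IsDiag := by
  rw [slideEdge, Sym2.map_pair_eq, Sym2.mk_isDiag_iff]
  intro hc
  apply h
  have := congrArg (fun A => symmDiff A ({j} : Finset (Fin m))) hc
  simpa [symmDiff_symmDiff_cancel_right] using this


variable {m : ℕ}

lemma slideEdge_not_diag' {j : Fin m} {e₀ : Sym2 (Finset (Fin m))} (h : ¬ e₀.IsDiag) :
    ¬ (slideEdge j e₀).IsDiag := by
  induction e₀ with
  | _ u v =>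
    rw [Sym2.mk_isDiag_iff] at h
    exact slideEdge_not_diag h

lemma cube_adj_symmDiff {X : Finset (Fin m)} {j : Fin m} :
    (cube m).Adj X (symmDiff X {j}) := by
  rw [cube_adj, symmDiff_symmDiff_cancel_left]
  simp

lemma slide_forward_bridge {X : Finset (Fin m)} {S0 S1 : SimpleGraph (Finset (Fin m))}
    (j : Fin m) :
    SlideAdj (m + 1) (UT X S0 S1) (UT (symmDiff X {j}) S0 S1) := by
  refine ⟨?_, j.succ, bridgeAt X, Or.inl ⟨bridge_mem_edgeSet_UT, ?_⟩⟩
  · intro h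
    exact cube_adj_symmDiff.ne (UT_inj h).1
  · rw [edgeSet_UT, uset_slide_bridge]
    rfl

lemma slide_forward_layer_false {X : Finset (Fin m)} {S0 S1 S0' : SimpleGraph (Finset (Fin m))}
    {j : Fin m} {e₀ : Sym2 (Finset (Fin m))} (he₀ : e₀ ∈ S0.edgeSet)
    (hS0' : S0' = SimpleGraph.fromEdgeSet (S0.edgeSet \ {e₀} ∪ {slideEdge j e₀}))
    (hne : S0 ≠ S0') :
    SlideAdj (m + 1) (UT X S0 S1) (UT X S0' S1) := by
  refine ⟨?_, j.succ, Sym2.map (lift false) e₀, Or.inl ⟨?_, ?_⟩⟩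
  · intro h
    exact hne (UT_inj h).2.1
  · rw [edgeSet_UT]
    exact Or.inl (Or.inl ⟨e₀, he₀, rfl⟩)
  · rw [edgeSet_UT, slideEdge_succ_lift,
      uset_slide_layer_false (slideEdge_not_diag' (S0.not_isDiag_of_mem_edgeSet he₀)),
      ← hS0']
    rfl

lemma slide_forward_layer_true {X : Finset (Fin m)} {S0 S1 S1' : SimpleGraph (Finset (Fin m))}
    {j : Fin m} {e₀ : Sym2 (Finset (Fin m))} (he₀ : e₀ ∈ S1.edgeSet)
    (hS1' : S1' = SimpleGraph.fromEdgeSet (S1.edgeSet \ {e₀} ∪ {slideEdge j e₀}))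
    (hne : S1 ≠ S1') :
    SlideAdj (m + 1) (UT X S0 S1) (UT X S0 S1') := by
  refine ⟨?_, j.succ, Sym2.map (lift true) e₀, Or.inl ⟨?_, ?_⟩⟩
  · intro h
    exact hne (UT_inj h).2.2
  · rw [edgeSet_UT]
    exact Or.inl (Or.inr ⟨e₀, he₀, rfl⟩)
  · rw [edgeSet_UT, slideEdge_succ_lift,
      uset_slide_layer_true (slideEdge_not_diag' (S1.not_isDiag_of_mem_edgeSet he₀)),
      ← hS1']
    rfl

lemma slideAdj_symm {n : ℕ} {T T' : SimpleGraph (Finset (Fin n))} (h : SlideAdj n T T') :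
    SlideAdj n T' T := by
  obtain ⟨hne, i, e, hc⟩ := h
  exact ⟨hne.symm, i, e, hc.symm⟩

/-- The three possible relations between decomposed adjacent trees. -/
def ProdRel (X X' : Finset (Fin m)) (S0 S1 S0' S1' : SimpleGraph (Finset (Fin m))) : Prop :=
  ((cube m).Adj X X' ∧ S0 = S0' ∧ S1 = S1') ∨
  (X = X' ∧ SlideAdj m S0 S0' ∧ S1 = S1') ∨
  (X = X' ∧ S0 = S0' ∧ SlideAdj m S1 S1')

lemma mk_lift_eq_mk_lift {b b' : Bool} {u v p q : Finset (Fin m)}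
    (h : s(lift b u, lift b v) = s(lift b' p, lift b' q)) : b = b' := by
  rw [Sym2.eq_iff] at h
  have h1 : lift b u = lift b' p ∨ lift b u = lift b' q := by tauto
  have h2 : b = true ↔ b' = true := by
    rcases h1 with h1 | h1
    · rw [← zero_mem_lift (b := b) (X := u), h1, zero_mem_lift]
    · rw [← zero_mem_lift (b := b) (X := u), h1, zero_mem_lift]
  cases b <;> cases b' <;> simp_all

/-- Key analysis: any slide out of a decomposed tree into another decomposed tree
is one of the three standard moves. -/
lemma slide_backward {X X' : Finset (Fin m)} {S0 S1 S0' S1' : SimpleGraph (Finset (Fin m))}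
    (hS0 : IsSpanningTreeOf S0 (cube m)) (hS1 : IsSpanningTreeOf S1 (cube m))
    (hS0' : IsSpanningTreeOf S0' (cube m)) (hS1' : IsSpanningTreeOf S1' (cube m))
    (hne : UT X S0 S1 ≠ UT X' S0' S1') {i : Fin (m + 1)} {e : Sym2 (Finset (Fin (m+1)))}
    (he : e ∈ (UT X S0 S1).edgeSet)
    (heq : UT X' S0' S1' =
      SimpleGraph.fromEdgeSet (((UT X S0 S1).edgeSet \ {e}) ∪ {slideEdge i e})) :
    ProdRel X X' S0 S1 S0' S1' := by
  rw [edgeSet_UT] at he heq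
  rcases he with (hl | hl) | hbr
  · -- e is a layer-false edge
    obtain ⟨e₀, he₀, rfl⟩ := hl
    induction e₀ with
    | _ u v =>
      have huv : S0.Adj u v := S0.mem_edgeSet.mp he₀
      rcases Fin.eq_zero_or_eq_succ i with rfl | ⟨j, rfl⟩
      · -- sliding a layer edge vertically: impossible
        exfalso
        rw [slideEdge_zero_lift] at heq
        -- pull false of the new tree avoids the edge s(u,v)
        have hle : pull false (UT X' S0' S1') ≤ S0 \ SimpleGraph.fromEdgeSet {s(u, v)} := by
          intro a b hab
          rw [heq] at hab
          have hab' : s(lift false a, lift false b) ∈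
              ((uset X S0 S1 \ {Sym2.map (lift false) s(u, v)}) ∪
                {Sym2.map (lift true) s(u, v)}) ∧ lift false a ≠ lift false b := hab
          obtain ⟨hmem, hne2⟩ := hab'
          rcases hmem with ⟨hmem, hne3⟩ | hmem
          · have hadj : S0.Adj a b := by
              have := mk_mem_uset_layer_iff.mp hmem
              exact this
            rw [SimpleGraph.sdiff_adj]
            refine ⟨hadj, ?_⟩
            rw [SimpleGraph.fromEdgeSet_adj]
            rintro ⟨hmem2, -⟩
            rw [Set.mem_singleton_iff] at hmem2
            apply hne3
            rw [Set.mem_singleton_iff, Sym2.map_pair_eq]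
            rcases Sym2.eq_iff.mp hmem2 with ⟨rfl, rfl⟩ | ⟨rfl, rfl⟩
            · rfl
            · exact Sym2.eq_swap
          · exfalso
            rw [Set.mem_singleton_iff, Sym2.map_pair_eq] at hmem
            exact absurd (mk_lift_eq_mk_lift hmem) (by simp)
        have hconn : (pull false (UT X' S0' S1')).Connected := by
          rw [pull_UT]
          exact hS0'.2.isConnected
        have hreach : (S0 \ SimpleGraph.fromEdgeSet {s(u, v)}).Reachable u v :=
          (hconn.preconnected u v).mono hle
        have hbr : S0.IsBridge s(u, v) :=
          (SimpleGraph.isAcyclic_iff_forall_adj_isBridge.mp hS0.2.IsAcyclic) huv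
        exact SimpleGraph.isBridge_iff.mp hbr hreach
      · -- horizontal slide of a layer-false edge
        rw [slideEdge_succ_lift,
          uset_slide_layer_false
            (slideEdge_not_diag' (S0.not_isDiag_of_mem_edgeSet he₀))] at heq
        have heq' : UT X' S0' S1' =
            UT X (SimpleGraph.fromEdgeSet
              (S0.edgeSet \ {s(u, v)} ∪ {slideEdge j s(u, v)})) S1 := heq
        obtain ⟨hX, hs0, hs1⟩ := UT_inj heq'
        refine Or.inr (Or.inl ⟨hX.symm, ⟨?_, j, s(u, v), Or.inl ⟨he₀, hs0⟩⟩, hs1.symm⟩)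
        intro hc
        apply hne
        rw [hX.symm, ← hs1, hc, hs0]
  · -- e is a layer-true edge
    obtain ⟨e₀, he₀, rfl⟩ := hl
    induction e₀ with
    | _ u v =>
      have huv : S1.Adj u v := S1.mem_edgeSet.mp he₀
      rcases Fin.eq_zero_or_eq_succ i with rfl | ⟨j, rfl⟩
      · exfalso
        rw [slideEdge_zero_lift] at heq
        have hle : pull true (UT X' S0' S1') ≤ S1 \ SimpleGraph.fromEdgeSet {s(u, v)} := by
          intro a b hab
          rw [heq] at hab
          have hab' : s(lift true a, lift true b) ∈
              ((uset X S0 S1 \ {Sym2.map (lift true) s(u, v)}) ∪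
                {Sym2.map (lift false) s(u, v)}) ∧ lift true a ≠ lift true b := hab
          obtain ⟨hmem, hne2⟩ := hab'
          rcases hmem with ⟨hmem, hne3⟩ | hmem
          · have hadj : S1.Adj a b := by
              have := mk_mem_uset_layer_iff.mp hmem
              exact this
            rw [SimpleGraph.sdiff_adj]
            refine ⟨hadj, ?_⟩
            rw [SimpleGraph.fromEdgeSet_adj]
            rintro ⟨hmem2, -⟩
            rw [Set.mem_singleton_iff] at hmem2
            apply hne3
            rw [Set.mem_singleton_iff, Sym2.map_pair_eq]
            rcases Sym2.eq_iff.mp hmem2 with ⟨rfl, rfl⟩ | ⟨rfl, rfl⟩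
            · rfl
            · exact Sym2.eq_swap
          · exfalso
            rw [Set.mem_singleton_iff, Sym2.map_pair_eq] at hmem
            exact absurd (mk_lift_eq_mk_lift hmem) (by simp)
        have hconn : (pull true (UT X' S0' S1')).Connected := by
          rw [pull_UT]
          exact hS1'.2.isConnected
        have hreach : (S1 \ SimpleGraph.fromEdgeSet {s(u, v)}).Reachable u v :=
          (hconn.preconnected u v).mono hle
        have hbr : S1.IsBridge s(u, v) :=
          (SimpleGraph.isAcyclic_iff_forall_adj_isBridge.mp hS1.2.IsAcyclic) huv
        exact SimpleGraph.isBridge_iff.mp hbr hreach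
      · rw [slideEdge_succ_lift,
          uset_slide_layer_true
            (slideEdge_not_diag' (S1.not_isDiag_of_mem_edgeSet he₀))] at heq
        have heq' : UT X' S0' S1' =
            UT X S0 (SimpleGraph.fromEdgeSet
              (S1.edgeSet \ {s(u, v)} ∪ {slideEdge j s(u, v)})) := heq
        obtain ⟨hX, hs0, hs1⟩ := UT_inj heq'
        refine Or.inr (Or.inr ⟨hX.symm, hs0.symm, ?_, j, s(u, v), Or.inl ⟨he₀, hs1⟩⟩)
        intro hc
        apply hne
        rw [hX.symm, ← hs0, hc, hs1]
  · -- e is the bridge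
    rw [Set.mem_singleton_iff] at hbr
    subst hbr
    rcases Fin.eq_zero_or_eq_succ i with rfl | ⟨j, rfl⟩
    · exfalso
      rw [slideEdge_zero_bridge] at heq
      have hrestore : (uset X S0 S1 \ {bridgeAt X}) ∪ {bridgeAt X} = uset X S0 S1 := by
        rw [Set.diff_union_self]
        exact Set.union_eq_self_of_subset_right
          (by rintro z rfl; exact Or.inr rfl)
      rw [hrestore] at heq
      exact hne heq.symm
    · rw [uset_slide_bridge] at heq
      have heq' : UT X' S0' S1' = UT (symmDiff X {j}) S0 S1 := heq
      obtain ⟨hX, hs0, hs1⟩ := UT_inj heq'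
      refine Or.inl ⟨?_, hs0.symm, hs1.symm⟩
      rw [hX]
      exact cube_adj_symmDiff

end Stmt15

namespace Stmt15

variable {m : ℕ}

lemma fin_mk_zero (h : 0 < m + 1) : (⟨0, h⟩ : Fin (m + 1)) = 0 := by
  apply Fin.ext
  simp

lemma redset_iff (h : 0 < m + 1) (T : SpanningTrees (m + 1)) :
    ReducesOver (fun i => dirCount T.1 i) {(⟨0, h⟩ : Fin (m + 1))} ↔ dirCount T.1 0 = 1 := by
  rw [fin_mk_zero h, ReducesOver, Finset.sum_singleton, Finset.card_singleton, pow_one]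

/-- The bundled union-tree map. -/
noncomputable def Psi (h : 0 < m + 1)
    (t : Finset (Fin m) × (SpanningTrees m × SpanningTrees m)) :
    {T : SpanningTrees (m + 1) //
      T ∈ {T : SpanningTrees (m + 1) |
        ReducesOver (fun i => dirCount T.1 i) {(⟨0, h⟩ : Fin (m + 1))}}} :=
  ⟨⟨UT t.1 t.2.1.1 t.2.2.1, UT_isSpanningTree t.2.1.2 t.2.2.2⟩,
    (redset_iff h _).mpr dirCount_zero_UT⟩

lemma Psi_bijective (h : 0 < m + 1) : Function.Bijective (Psi h) := by
  constructor
  · rintro ⟨X, S0, S1⟩ ⟨X', S0', S1'⟩ hEq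
    have h' : UT X S0.1 S1.1 = UT X' S0'.1 S1'.1 :=
      congrArg (fun x => x.1.1) hEq
    obtain ⟨h1, h2, h3⟩ := UT_inj h'
    exact Prod.ext h1 (Prod.ext (Subtype.ext h2) (Subtype.ext h3))
  · rintro ⟨⟨T, hT⟩, hTS⟩
    have hcnt : dirCount T 0 = 1 := (redset_iff h _).mp hTS
    obtain ⟨Xs, hbr, hv⟩ := exists_bridge hT.1 hcnt
    have hrec := reconstruct hT.1 hbr hv
    refine ⟨(Xs, ⟨pull false T, pull_isSpanningTree hT hv⟩,
      ⟨pull true T, pull_isSpanningTree hT hv⟩), ?_⟩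
    apply Subtype.ext
    apply Subtype.ext
    exact hrec.symm

lemma Psi_adj (h : 0 < m + 1)
    (a b : Finset (Fin m) × (SpanningTrees m × SpanningTrees m)) :
    (((eslide (m + 1)).induce
        {T : SpanningTrees (m + 1) |
          ReducesOver (fun i => dirCount T.1 i) {(⟨0, h⟩ : Fin (m + 1))}}).Adj
        (Psi h a) (Psi h b)) ↔
      (((cube m).boxProd ((eslide m).boxProd (eslide m))).Adj a b) := by
  obtain ⟨X, S0, S1⟩ := a
  obtain ⟨X', S0', S1'⟩ := b
  show SlideAdj (m + 1) (UT X S0.1 S1.1) (UT X' S0'.1 S1'.1) ↔ _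
  rw [SimpleGraph.boxProd_adj, SimpleGraph.boxProd_adj]
  constructor
  · rintro ⟨hne, i, e, hcase⟩
    rcases hcase with ⟨he, heq⟩ | ⟨he, heq⟩
    · have hPR := slide_backward S0.2 S1.2 S0'.2 S1'.2 hne he heq
      rcases hPR with ⟨h1, h2, h3⟩ | ⟨h1, h2, h3⟩ | ⟨h1, h2, h3⟩
      · exact Or.inl ⟨h1, Prod.ext (Subtype.ext h2) (Subtype.ext h3)⟩
      · refine Or.inr ⟨Or.inl ⟨?_, Subtype.ext h3⟩, h1⟩
        exact h2
      · refine Or.inr ⟨Or.inr ⟨?_, Subtype.ext h2⟩, h1⟩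
        exact h3
    · have hPR := slide_backward S0'.2 S1'.2 S0.2 S1.2 (Ne.symm hne) he heq
      rcases hPR with ⟨h1, h2, h3⟩ | ⟨h1, h2, h3⟩ | ⟨h1, h2, h3⟩
      · exact Or.inl ⟨h1.symm, Prod.ext (Subtype.ext h2.symm) (Subtype.ext h3.symm)⟩
      · refine Or.inr ⟨Or.inl ⟨?_, Subtype.ext h3.symm⟩, h1.symm⟩
        exact slideAdj_symm h2
      · refine Or.inr ⟨Or.inr ⟨?_, Subtype.ext h2.symm⟩, h1.symm⟩
        exact slideAdj_symm h3
  · rintro (⟨hXX, hsnd⟩ | ⟨hinner, hX⟩)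
    · obtain ⟨j, hj⟩ : ∃ j, X' = symmDiff X {j} := by
        rw [cube_adj, Finset.card_eq_one] at hXX
        obtain ⟨j, hj⟩ := hXX
        exact ⟨j, by rw [← hj, symmDiff_symmDiff_cancel_left]⟩
      injection hsnd with h1 h2
      subst h1
      subst h2
      rw [hj]
      exact slide_forward_bridge j
    · obtain rfl : X = X' := hX
      rcases hinner with ⟨hadj0, hS1e⟩ | ⟨hadj1, hS0e⟩
      · obtain rfl : S1 = S1' := hS1e
        obtain ⟨hne0, j, e₀, hc⟩ := hadj0
        rcases hc with ⟨he₀, heq⟩ | ⟨he₀, heq⟩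
        · exact slide_forward_layer_false he₀ heq hne0
        · exact slideAdj_symm (slide_forward_layer_false he₀ heq (Ne.symm hne0))
      · obtain rfl : S0 = S0' := hS0e
        obtain ⟨hne1, j, e₀, hc⟩ := hadj1
        rcases hc with ⟨he₀, heq⟩ | ⟨he₀, heq⟩
        · exact slide_forward_layer_true he₀ heq hne1
        · exact slideAdj_symm (slide_forward_layer_true he₀ heq (Ne.symm hne1))

end Stmt15

/-- Theorem: edge slide graph of trees reducing over `{1}`. For
`n ≥ 2`, the subgraph of the edge slide graph `E(n)` induced by the spanning trees of
`Q_n` reducing over `{1}` (direction `⟨0, _⟩` in 0-based indexing) is isomorphic to the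
box product `Q_{n-1} □ E(n-1) □ E(n-1)`. -/
theorem stmt15 (n : ℕ) (hn : 2 ≤ n) :
    Nonempty
      (((eslide n).induce
          {T : SpanningTrees n |
            ReducesOver (fun i => dirCount T.1 i) {(⟨0, by omega⟩ : Fin n)}}) ≃g
        ((cube (n - 1)).boxProd ((eslide (n - 1)).boxProd (eslide (n - 1))))) := by
  obtain ⟨m, rfl⟩ : ∃ m, n = m + 1 := ⟨n - 1, by omega⟩
  refine ⟨SimpleGraph.Iso.symm ⟨Equiv.ofBijective _ (Stmt15.Psi_bijective (by omega)), ?_⟩⟩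
  intro a b
  exact Stmt15.Psi_adj (by omega) a b
end
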